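/- arXiv:1811.02139 — 4 statements merged into one kernel-verified Lean document; each statement's English description precedes it below -/
import Mathlib

section
/- Let T be a complete first-order theory in a countable language L, U a monster model of T (κ-saturated and strongly κ-homogeneous for a sufficiently large cardinal κ), M an elementary substructure of U with |M| < κ, and φ(x;y) a partitioned L-formula. Let μ ∈ 𝔐_φ(U) be finitely satisfiable over M, and let X = S_y(M). Then the function F_μ^φ lies in the closure of conv_ℚ(𝔽_M^φ) taken in ℝ^X with the product topology. -/
open FirstOrder Cardinal Set Filter Topology

/-! ### Monster model hypotheses -/

/-- `U` is `κ`-saturated: every set of formulas in finitely many object variables with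
parameters from a set of size `< κ` which is finitely satisfiable in `U` is realized in `U`. -/
def IsSaturated (L : FirstOrder.Language.{0, 0}) (U : Type) [L.Structure U]
    (κ : Cardinal.{0}) : Prop :=
  ∀ (ι : Type), #ι < κ → ∀ (c : ι → U) (n : ℕ) (S : Set (L.Formula (Fin n ⊕ ι))),
    (∀ s : Finset (L.Formula (Fin n ⊕ ι)), ↑s ⊆ S →
      ∃ a : Fin n → U, ∀ ψ ∈ s, ψ.Realize (Sum.elim a c)) →
    ∃ a : Fin n → U, ∀ ψ ∈ S, ψ.Realize (Sum.elim a c)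

/-- `U` is strongly `κ`-homogeneous: any two tuples of length `< κ` with the same type
are conjugate under an automorphism of `U`. -/
def IsStronglyHomogeneous (L : FirstOrder.Language.{0, 0}) (U : Type) [L.Structure U]
    (κ : Cardinal.{0}) : Prop :=
  ∀ (ι : Type), #ι < κ → ∀ a b : ι → U,
    (∀ ψ : L.Formula ι, ψ.Realize a ↔ ψ.Realize b) →
    ∃ σ : U ≃[L] U, ∀ i, σ (a i) = b i

variable {L : FirstOrder.Language.{0, 0}}

/-! ### NIP formulas -/

/-- The partitioned formula `φ(x;y)` has IP in `U`. -/
def FormulaHasIP (U : Type) [L.Structure U] {nx ny : ℕ}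
    (φ : L.Formula (Fin nx ⊕ Fin ny)) : Prop :=
  ∀ n : ℕ, ∃ A : Finset (Fin nx → U), n ≤ A.card ∧
    ∀ K ⊆ A, ∃ bK : Fin ny → U, ∀ c ∈ A, (φ.Realize (Sum.elim c bK) ↔ c ∈ K)

/-- The partitioned formula `φ(x;y)` is NIP in `U`. -/
def FormulaIsNIP (U : Type) [L.Structure U] {nx ny : ℕ}
    (φ : L.Formula (Fin nx ⊕ Fin ny)) : Prop :=
  ¬ FormulaHasIP U φ

/-! ### `φ`-definable sets and local Keisler measures -/

/-- The instance `φ(x;b)` of `φ(x;y)`, as a subset of `U^x`. -/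
def phiSet {U : Type} [L.Structure U] {nx ny : ℕ}
    (φ : L.Formula (Fin nx ⊕ Fin ny)) (b : Fin ny → U) : Set (Fin nx → U) :=
  { a | φ.Realize (Sum.elim a b) }

/-- The Boolean algebra `Def_φ(U)` of subsets of `U^x` generated by the instances
`φ(x;b)`, `b ∈ U^y`. -/
inductive InPhiAlg {U : Type} [L.Structure U] {nx ny : ℕ}
    (φ : L.Formula (Fin nx ⊕ Fin ny)) : Set (Fin nx → U) → Prop
  | basic (b : Fin ny → U) : InPhiAlg φ (phiSet φ b)
  | empty : InPhiAlg φ ∅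
  | compl {s : Set (Fin nx → U)} : InPhiAlg φ s → InPhiAlg φ sᶜ
  | union {s t : Set (Fin nx → U)} : InPhiAlg φ s → InPhiAlg φ t → InPhiAlg φ (s ∪ t)

/-- A finitely additive probability measure on `Def_φ(U)`, i.e. an element of `𝔐_φ(U)`. -/
structure KeislerMeasure (U : Type) [L.Structure U] {nx ny : ℕ}
    (φ : L.Formula (Fin nx ⊕ Fin ny)) where
  toFun : Set (Fin nx → U) → ℝ
  nonneg : ∀ s, InPhiAlg φ s → 0 ≤ toFun s
  total : toFun Set.univ = 1
  additive : ∀ s t, InPhiAlg φ s → InPhiAlg φ t → Disjoint s t →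
    toFun (s ∪ t) = toFun s + toFun t

/-! ### Types over `M` and the Stone space `S_y(M)` -/

/-- `b` and `c` have the same type over `M`. -/
def SameTypeOver {U : Type} [L.Structure U] (M : L.ElementarySubstructure U) {n : ℕ}
    (b c : Fin n → U) : Prop :=
  ∀ (k : ℕ) (ψ : L.Formula (Fin n ⊕ Fin k)) (m : Fin k → M),
    (ψ.Realize (Sum.elim b (fun i => (m i : U))) ↔
      ψ.Realize (Sum.elim c (fun i => (m i : U))))

/-- The setoid of "equality of type over `M`". -/
def typeSetoid {U : Type} [L.Structure U] (M : L.ElementarySubstructure U) (n : ℕ) :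
    Setoid (Fin n → U) where
  r := SameTypeOver M
  iseqv := ⟨fun _ _ _ _ => Iff.rfl, fun h k ψ m => (h k ψ m).symm,
    fun h h' k ψ m => (h k ψ m).trans (h' k ψ m)⟩

/-- The space `S_n(M)` of complete `n`-types over `M` (realized in the monster `U`). -/
def TypeSpace {U : Type} [L.Structure U] (M : L.ElementarySubstructure U) (n : ℕ) : Type :=
  Quotient (typeSetoid M n)

/-- The Stone topology on `S_n(M)`, generated by the sets of types containing a given
formula over `M`. -/
instance typeSpaceTopology {U : Type} [L.Structure U] (M : L.ElementarySubstructure U)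
    (n : ℕ) : TopologicalSpace (TypeSpace M n) :=
  TopologicalSpace.generateFrom
    { S | ∃ (k : ℕ) (ψ : L.Formula (Fin n ⊕ Fin k)) (m : Fin k → M),
        S = { p : TypeSpace M n | ∃ b : Fin n → U,
          Quotient.mk (typeSetoid M n) b = p ∧
            ψ.Realize (Sum.elim b (fun i => (m i : U))) } }

/-- The function `F_a^φ : S_y(M) → ℝ`, the indicator of `φ(a;y) ∈ p` for `a ∈ M^x`. -/
noncomputable def FunF {U : Type} [L.Structure U] {nx ny : ℕ}
    (φ : L.Formula (Fin nx ⊕ Fin ny)) (M : L.ElementarySubstructure U)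
    (a : Fin nx → M) (p : TypeSpace M ny) : ℝ :=
  Set.indicator
    { q : TypeSpace M ny | ∃ b : Fin ny → U, Quotient.mk (typeSetoid M ny) b = q ∧
        φ.Realize (Sum.elim (fun i => (a i : U)) b) } (fun _ => 1) p

/-- The family `𝔽_M^φ = {F_a^φ : a ∈ M^x}` of functions on `S_y(M)`. -/
def FamilyF {U : Type} [L.Structure U] {nx ny : ℕ}
    (φ : L.Formula (Fin nx ⊕ Fin ny)) (M : L.ElementarySubstructure U) :
    Set (TypeSpace M ny → ℝ) :=
  Set.range (fun a : Fin nx → M => FunF φ M a)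

/-- The function `F_μ^φ : S_y(M) → ℝ`, `p ↦ μ(φ(x;b))` for `b ⊨ p` (well defined when `μ`
is `φ`-invariant over `M`). -/
noncomputable def FunMu {U : Type} [L.Structure U] {nx ny : ℕ}
    (φ : L.Formula (Fin nx ⊕ Fin ny)) (M : L.ElementarySubstructure U)
    (μ : KeislerMeasure U φ) (p : TypeSpace M ny) : ℝ :=
  μ.toFun (phiSet φ (Quotient.out p))

/-! ### Properties of local Keisler measures -/

/-- `μ` is `φ`-invariant over `M`. -/
def PhiInvariant {U : Type} [L.Structure U] {nx ny : ℕ}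
    (φ : L.Formula (Fin nx ⊕ Fin ny)) (M : L.ElementarySubstructure U)
    (μ : KeislerMeasure U φ) : Prop :=
  ∀ b c : Fin ny → U, SameTypeOver M b c → μ.toFun (phiSet φ b) = μ.toFun (phiSet φ c)

/-- `μ` is `M`-invariant: automorphisms of `U` fixing `M` pointwise preserve the measure of
every set in `Def_φ(U)`. -/
def MInvariant {U : Type} [L.Structure U] {nx ny : ℕ}
    (φ : L.Formula (Fin nx ⊕ Fin ny)) (M : L.ElementarySubstructure U)
    (μ : KeislerMeasure U φ) : Prop :=
  ∀ σ : U ≃[L] U, (∀ m : M, σ (m : U) = (m : U)) → ∀ s : Set (Fin nx → U), InPhiAlg φ s →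
    μ.toFun ((fun a : Fin nx → U => (σ : U → U) ∘ a) '' s) = μ.toFun s

/-- `μ` is `φ`-definable over `M` (Definition 4.3(i)). -/
def PhiDefinable {U : Type} [L.Structure U] {nx ny : ℕ}
    (φ : L.Formula (Fin nx ⊕ Fin ny)) (M : L.ElementarySubstructure U)
    (μ : KeislerMeasure U φ) : Prop :=
  ∀ ε : ℝ, 0 < ε → ∃ (m k : ℕ) (ψ : Fin m → L.Formula (Fin ny ⊕ Fin k)) (c : Fin k → M),
    (∀ b : Fin ny → U, ∃! i : Fin m, (ψ i).Realize (Sum.elim b (fun j => (c j : U)))) ∧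
    ∀ i : Fin m, ∀ e e' : Fin ny → U,
      (ψ i).Realize (Sum.elim e (fun j => (c j : U))) →
      (ψ i).Realize (Sum.elim e' (fun j => (c j : U))) →
      |μ.toFun (phiSet φ e) - μ.toFun (phiSet φ e')| < ε

/-- `μ` is finitely satisfiable over `M`: every `φ`-formula of positive measure has a
realization in `M`. -/
def FinSat {U : Type} [L.Structure U] {nx ny : ℕ}
    (φ : L.Formula (Fin nx ⊕ Fin ny)) (M : L.ElementarySubstructure U)
    (μ : KeislerMeasure U φ) : Prop :=
  ∀ s : Set (Fin nx → U), InPhiAlg φ s → 0 < μ.toFun s →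
    ∃ a : Fin nx → M, (fun i => (a i : U)) ∈ s

/-- `μ` is `φ`-generically stable over `M` (Definition 4.3(iii)). -/
def PhiGenericallyStable {U : Type} [L.Structure U] {nx ny : ℕ}
    (φ : L.Formula (Fin nx ⊕ Fin ny)) (M : L.ElementarySubstructure U)
    (μ : KeislerMeasure U φ) : Prop :=
  PhiDefinable φ M μ ∧ FinSat φ M μ

/-! ### The algebra `Δ_φ` of partitioned formulas and full generic stability -/

/-- The family `Δ_φ` of Boolean combinations `θ(x; y_1, ..., y_k)` of the formulas
`φ(x;y_i)`, viewed as set-valued maps on tuples of parameters. -/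
inductive InDeltaPhi {U : Type} [L.Structure U] {nx ny : ℕ}
    (φ : L.Formula (Fin nx ⊕ Fin ny)) :
    (k : ℕ) → ((Fin k → Fin ny → U) → Set (Fin nx → U)) → Prop
  | inst (k : ℕ) (j : Fin k) : InDeltaPhi φ k (fun bs => phiSet φ (bs j))
  | empty (k : ℕ) : InDeltaPhi φ k (fun _ => ∅)
  | compl {k : ℕ} {G} : InDeltaPhi φ k G → InDeltaPhi φ k (fun bs => (G bs)ᶜ)
  | union {k : ℕ} {G H} : InDeltaPhi φ k G → InDeltaPhi φ k H →
      InDeltaPhi φ k (fun bs => G bs ∪ H bs)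

/-- `μ` is definable over `M` (Definition 4.11): for every `θ(x;ȳ) ∈ Δ_φ` and `ε > 0` there
is a partition of `U^ȳ` into `M`-definable pieces on which `μ(θ(x;·))` varies less than `ε`. -/
def DefinableOver {U : Type} [L.Structure U] {nx ny : ℕ}
    (φ : L.Formula (Fin nx ⊕ Fin ny)) (M : L.ElementarySubstructure U)
    (μ : KeislerMeasure U φ) : Prop :=
  ∀ (k : ℕ) (G : (Fin k → Fin ny → U) → Set (Fin nx → U)), InDeltaPhi φ k G →
    ∀ ε : ℝ, 0 < ε →
      ∃ (m j : ℕ) (ρ : Fin m → L.Formula ((Fin k × Fin ny) ⊕ Fin j)) (c : Fin j → M),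
        (∀ bs : Fin k → Fin ny → U, ∃! i : Fin m,
          (ρ i).Realize (Sum.elim (fun q => bs q.1 q.2) (fun t => (c t : U)))) ∧
        ∀ i : Fin m, ∀ e e' : Fin k → Fin ny → U,
          (ρ i).Realize (Sum.elim (fun q => e q.1 q.2) (fun t => (c t : U))) →
          (ρ i).Realize (Sum.elim (fun q => e' q.1 q.2) (fun t => (c t : U))) →
          |μ.toFun (G e) - μ.toFun (G e')| < ε

/-- `μ` is generically stable over `M` (Definition 4.11). -/
def GenericallyStable {U : Type} [L.Structure U] {nx ny : ℕ}
    (φ : L.Formula (Fin nx ⊕ Fin ny)) (M : L.ElementarySubstructure U)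
    (μ : KeislerMeasure U φ) : Prop :=
  DefinableOver φ M μ ∧ FinSat φ M μ

/-- The average measure `Av(ā)` of the finite sequence `ā = (a_1, ..., a_n)`. -/
noncomputable def Av {α : Type*} {n : ℕ} (a : Fin n → α) (s : Set α) : ℝ :=
  (∑ i : Fin n, Set.indicator s (fun _ => (1 : ℝ)) (a i)) / n

/-- `μ` is finitely approximable over `M` (Definition 4.12). -/
def FinApprox {U : Type} [L.Structure U] {nx ny : ℕ}
    (φ : L.Formula (Fin nx ⊕ Fin ny)) (M : L.ElementarySubstructure U)
    (μ : KeislerMeasure U φ) : Prop :=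
  ∀ (k : ℕ) (G : (Fin k → Fin ny → U) → Set (Fin nx → U)), InDeltaPhi φ k G →
    ∀ ε : ℝ, 0 < ε → ∃ (n : ℕ), 0 < n ∧ ∃ a : Fin n → (Fin nx → M),
      ∀ bs : Fin k → Fin ny → U,
        |μ.toFun (G bs) - Av (fun i => fun q => ((a i q : U))) (G bs)| < ε

/-! ### Convexity and dependence notions -/

/-- The set of all finite rational convex combinations of elements of `A`. -/
def ratConv {E : Type*} [AddCommMonoid E] [Module ℝ E] (A : Set E) : Set E :=
  { z | ∃ (n : ℕ) (r : Fin n → ℚ) (v : Fin n → E),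
      (∀ i, 0 < r i) ∧ (∑ i, ((r i : ℝ))) = 1 ∧ (∀ i, v i ∈ A) ∧ z = ∑ i, ((r i : ℝ)) • v i }

/-- A two-variable map `g : X × Y → ℝ` is `(r,ε)`-independent if for every `n` there is a
set `A ⊆ X` with `|A| > n` which `g` `(r,ε)`-shatters; `g` is independent if it is
`(r,ε)`-independent for some `r ∈ (0,1)` and `ε > 0`, and dependent otherwise. -/
def MapIndependent {X Y : Type*} (g : X → Y → ℝ) : Prop :=
  ∃ r : ℝ, r ∈ Set.Ioo (0 : ℝ) 1 ∧ ∃ ε : ℝ, 0 < ε ∧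
    ∀ n : ℕ, ∃ A : Finset X, n < A.card ∧
      ∀ K ⊆ A, ∃ b : Y, ∀ a ∈ A, (g a b ≤ r ↔ a ∈ K) ∧ (r + ε ≤ g a b ↔ a ∉ K)

/-- A set `A ⊆ ℝ^Y` is sequentially independent if there are a sequence `(f_n)` of elements
of `A`, a real `r`, and `ε > 0` such that for every `I ⊆ ℕ` there is `b_I ∈ Y` with
`{n : f_n(b_I) ≤ r} = I` and `{n : f_n(b_I) ≥ r + ε} = ℕ ∖ I`. -/
def SeqIndependent {Y : Type*} (A : Set (Y → ℝ)) : Prop :=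
  ∃ f : ℕ → (Y → ℝ), (∀ n, f n ∈ A) ∧ ∃ r ε : ℝ, 0 < ε ∧
    ∀ I : Set ℕ, ∃ b : Y, {n : ℕ | f n b ≤ r} = I ∧ {n : ℕ | r + ε ≤ f n b} = Iᶜ

/-! ### Auxiliary lemmas for Proposition 4.7 -/

section Aux47
open scoped Classical

variable {U : Type} [L.Structure U] {nx ny : ℕ}
  (φ : L.Formula (Fin nx ⊕ Fin ny)) (M : L.ElementarySubstructure U)

lemma phiAlg_univ : InPhiAlg φ (Set.univ : Set (Fin nx → U)) := by
  rw [← Set.compl_empty]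
  exact InPhiAlg.compl InPhiAlg.empty

lemma phiAlg_inter {s t : Set (Fin nx → U)} (hs : InPhiAlg φ s) (ht : InPhiAlg φ t) :
    InPhiAlg φ (s ∩ t) := by
  have h : s ∩ t = (sᶜ ∪ tᶜ)ᶜ := by
    rw [Set.compl_union, compl_compl, compl_compl]
  rw [h]
  exact InPhiAlg.compl (InPhiAlg.union (InPhiAlg.compl hs) (InPhiAlg.compl ht))

lemma mu_empty (μ : KeislerMeasure U φ) : μ.toFun ∅ = 0 := by
  have h := μ.additive ∅ ∅ InPhiAlg.empty InPhiAlg.empty (by simp)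
  rw [Set.union_empty] at h
  linarith

/-- The cell of the partition of `U^x` generated by the instances `φ(x; b_p)`, `p ∈ J`,
corresponding to the subset `K` of `J`. -/
def cell47 (J K : Finset (TypeSpace M ny)) : Set (Fin nx → U) :=
  { a | ∀ p ∈ J, (φ.Realize (Sum.elim a (Quotient.out p)) ↔ p ∈ K) }

lemma cell47_empty (K : Finset (TypeSpace M ny)) : cell47 φ M ∅ K = Set.univ := by
  ext a; simp [cell47]

lemma cell47_insert (q : TypeSpace M ny) (J K : Finset (TypeSpace M ny)) :
    cell47 φ M (insert q J) K =
      (if q ∈ K then phiSet φ (Quotient.out q) else (phiSet φ (Quotient.out q))ᶜ) ∩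
        cell47 φ M J K := by
  ext a
  by_cases hq : q ∈ K <;>
    simp [cell47, phiSet, Finset.forall_mem_insert, hq]

lemma cell47_insert_notmem (J : Finset (TypeSpace M ny)) (q : TypeSpace M ny)
    (K : Finset (TypeSpace M ny)) (hq : q ∉ J) :
    cell47 φ M J (insert q K) = cell47 φ M J K := by
  ext a
  simp only [cell47, Set.mem_setOf_eq]
  refine forall_congr' fun p => forall_congr' fun hp => ?_
  have hne : p ≠ q := fun h => hq (h ▸ hp)
  rw [Finset.mem_insert]
  simp [hne]

lemma cell47_alg (J K : Finset (TypeSpace M ny)) : InPhiAlg φ (cell47 φ M J K) := by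
  classical
  induction J using Finset.induction_on with
  | empty => rw [cell47_empty]; exact phiAlg_univ φ
  | @insert q J hq ih =>
    rw [cell47_insert]
    split_ifs with h
    · exact phiAlg_inter φ (InPhiAlg.basic _) ih
    · exact phiAlg_inter φ (InPhiAlg.compl (InPhiAlg.basic _)) ih

lemma partition47 (μ : KeislerMeasure U φ) (J : Finset (TypeSpace M ny)) :
    ∀ S : Set (Fin nx → U), InPhiAlg φ S →
      μ.toFun S = ∑ K ∈ J.powerset, μ.toFun (S ∩ cell47 φ M J K) := by
  classical
  induction J using Finset.induction_on with
  | empty =>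
    intro S hS
    simp [cell47_empty]
  | @insert q J hq ih =>
    intro S hS
    rw [Finset.sum_powerset_insert hq, ← Finset.sum_add_distrib, ih S hS]
    refine Finset.sum_congr rfl fun K hK => ?_
    have hqK : q ∉ K := fun h => hq (Finset.mem_powerset.mp hK h)
    rw [cell47_insert, cell47_insert, if_neg hqK, if_pos (Finset.mem_insert_self q K),
      cell47_insert_notmem φ M J q K hq]
    have e1 : S ∩ ((phiSet φ (Quotient.out q))ᶜ ∩ cell47 φ M J K) =
        (S ∩ cell47 φ M J K) ∩ (phiSet φ (Quotient.out q))ᶜ := by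
      ext a; simp only [Set.mem_inter_iff, Set.mem_compl_iff]; tauto
    have e2 : S ∩ (phiSet φ (Quotient.out q) ∩ cell47 φ M J K) =
        (S ∩ cell47 φ M J K) ∩ phiSet φ (Quotient.out q) := by
      ext a; simp only [Set.mem_inter_iff, Set.mem_compl_iff]; tauto
    rw [e1, e2]
    have hA : InPhiAlg φ (S ∩ cell47 φ M J K) := phiAlg_inter φ hS (cell47_alg φ M J K)
    have h1 : InPhiAlg φ ((S ∩ cell47 φ M J K) ∩ phiSet φ (Quotient.out q)) :=
      phiAlg_inter φ hA (InPhiAlg.basic _)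
    have h2 : InPhiAlg φ ((S ∩ cell47 φ M J K) ∩ (phiSet φ (Quotient.out q))ᶜ) :=
      phiAlg_inter φ hA (InPhiAlg.compl (InPhiAlg.basic _))
    have hdis : Disjoint ((S ∩ cell47 φ M J K) ∩ phiSet φ (Quotient.out q))
        ((S ∩ cell47 φ M J K) ∩ (phiSet φ (Quotient.out q))ᶜ) :=
      Disjoint.mono inf_le_right inf_le_right disjoint_compl_right
    have hadd := μ.additive _ _ h1 h2 hdis
    rw [Set.inter_union_compl] at hadd
    rw [hadd, add_comm]

lemma realize_swap47 (a : Fin nx → M) {b c : Fin ny → U} (h : SameTypeOver M b c) :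
    (φ.Realize (Sum.elim (fun i => (a i : U)) b) ↔
      φ.Realize (Sum.elim (fun i => (a i : U)) c)) := by
  have h' := h nx (φ.relabel (Sum.elim Sum.inr Sum.inl)) a
  have e : ∀ d : Fin ny → U,
      (Sum.elim d (fun i => (a i : U))) ∘ (Sum.elim Sum.inr Sum.inl : Fin nx ⊕ Fin ny → Fin ny ⊕ Fin nx)
        = Sum.elim (fun i => (a i : U)) d := by
    intro d; funext x; cases x <;> rfl
  rw [Language.Formula.realize_relabel, Language.Formula.realize_relabel, e b, e c] at h'
  exact h'

lemma funF_eval47 (a : Fin nx → M) (p : TypeSpace M ny) :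
    FunF φ M a p =
      if φ.Realize (Sum.elim (fun i => (a i : U)) (Quotient.out p)) then (1 : ℝ) else 0 := by
  have hmem : p ∈ { q : TypeSpace M ny | ∃ b : Fin ny → U,
      Quotient.mk (typeSetoid M ny) b = q ∧
        φ.Realize (Sum.elim (fun i => (a i : U)) b) } ↔
      φ.Realize (Sum.elim (fun i => (a i : U)) (Quotient.out p)) := by
    constructor
    · rintro ⟨b, hb, hφ⟩
      have hst : SameTypeOver M b (Quotient.out p) :=
        Quotient.exact (hb.trans (Quotient.out_eq p).symm)
      exact (realize_swap47 φ M a hst).mp hφ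
    · intro h
      exact ⟨Quotient.out p, Quotient.out_eq p, h⟩
  rw [FunF, Set.indicator_apply]
  by_cases h : φ.Realize (Sum.elim (fun i => (a i : U)) (Quotient.out p)) <;>
    simp [hmem, h]

end Aux47

section Aux47b
open scoped Classical

lemma ratApprox47 {ι : Type*} (s : Finset ι) (hs : s.Nonempty) (w : ι → ℝ)
    (hw : ∀ i ∈ s, 0 < w i) (hsum : ∑ i ∈ s, w i = 1) (ε : ℝ) (hε : 0 < ε) :
    ∃ r : ι → ℚ, (∀ i ∈ s, 0 < r i) ∧ ((∑ i ∈ s, (r i : ℝ)) = 1) ∧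
      (∑ i ∈ s, |(r i : ℝ) - w i|) < ε := by
  classical
  obtain ⟨i₀, hi₀⟩ := hs
  set δ : ℝ := ε / (2 * (s.card + 1)) with hδ
  have hδpos : 0 < δ := by positivity
  have hch : ∀ i, ∃ q : ℚ, i ∈ s.erase i₀ →
      (max (w i - δ) (w i / 2) < (q : ℝ) ∧ (q : ℝ) < w i) := by
    intro i
    by_cases hi : i ∈ s.erase i₀
    · have hwi : 0 < w i := hw i (Finset.mem_of_mem_erase hi)
      have hlt : max (w i - δ) (w i / 2) < w i := max_lt (by linarith) (by linarith)
      obtain ⟨q, hq1, hq2⟩ := exists_rat_btwn hlt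
      exact ⟨q, fun _ => ⟨hq1, hq2⟩⟩
    · exact ⟨0, fun h => absurd h hi⟩
  choose q hq using hch
  have hqpos : ∀ i ∈ s.erase i₀, 0 < (q i : ℝ) := by
    intro i hi
    have hwi : 0 < w i := hw i (Finset.mem_of_mem_erase hi)
    have h1 : w i / 2 ≤ max (w i - δ) (w i / 2) := le_max_right _ _
    have h2 := (hq i hi).1
    linarith
  have hdiff : ∀ i ∈ s.erase i₀, 0 < w i - (q i : ℝ) ∧ w i - (q i : ℝ) < δ := by
    intro i hi
    have h1 : w i - δ ≤ max (w i - δ) (w i / 2) := le_max_left _ _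
    have h2 := (hq i hi).1
    have h3 := (hq i hi).2
    exact ⟨by linarith, by linarith⟩
  set Swq : ℝ := ∑ j ∈ s.erase i₀, (w j - (q j : ℝ)) with hSwq
  have hSnn : 0 ≤ Swq := Finset.sum_nonneg fun i hi => le_of_lt (hdiff i hi).1
  have hSle : Swq ≤ (s.erase i₀).card • δ :=
    Finset.sum_le_card_nsmul _ _ δ fun i hi => le_of_lt (hdiff i hi).2
  have hScard : ((s.erase i₀).card : ℝ) ≤ s.card := by
    exact_mod_cast Finset.card_le_card (Finset.erase_subset _ _)
  have hSle' : Swq ≤ (s.card : ℝ) * δ := by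
    rw [nsmul_eq_mul] at hSle
    nlinarith
  set r : ι → ℚ := fun i => if i = i₀ then 1 - ∑ j ∈ s.erase i₀, q j else q i with hr
  have hsum' : w i₀ + ∑ j ∈ s.erase i₀, w j = 1 := by
    rw [Finset.add_sum_erase s w hi₀]; exact hsum
  have hSwq' : Swq = (∑ j ∈ s.erase i₀, w j) - ∑ j ∈ s.erase i₀, (q j : ℝ) := by
    rw [hSwq, Finset.sum_sub_distrib]
  have hri₀ : ((r i₀ : ℚ) : ℝ) = w i₀ + Swq := by
    rw [hr]
    simp only [if_pos rfl]
    push_cast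
    linarith
  have hrerase : ∀ i ∈ s.erase i₀, r i = q i := by
    intro i hi
    rw [hr]
    simp [Finset.ne_of_mem_erase hi]
  refine ⟨r, ?_, ?_, ?_⟩
  · intro i hi
    by_cases h : i = i₀
    · subst h
      have : (0 : ℝ) < ((r i : ℚ) : ℝ) := by
        rw [hri₀]; have := hw i hi; linarith
      exact_mod_cast this
    · have hi' : i ∈ s.erase i₀ := Finset.mem_erase.mpr ⟨h, hi⟩
      rw [hrerase i hi']
      exact_mod_cast hqpos i hi'
  · rw [← Finset.add_sum_erase s (fun i => ((r i : ℚ) : ℝ)) hi₀]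
    have he : ∑ j ∈ s.erase i₀, ((r j : ℚ) : ℝ) = ∑ j ∈ s.erase i₀, ((q j : ℚ) : ℝ) :=
      Finset.sum_congr rfl fun j hj => by rw [hrerase j hj]
    rw [he, hri₀]
    linarith
  · rw [← Finset.add_sum_erase s (fun i => |((r i : ℚ) : ℝ) - w i|) hi₀]
    have h1 : |((r i₀ : ℚ) : ℝ) - w i₀| = Swq := by
      rw [hri₀]
      simp [abs_of_nonneg hSnn]
    have h2 : ∑ j ∈ s.erase i₀, |((r j : ℚ) : ℝ) - w j| = Swq := by
      rw [hSwq]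
      refine Finset.sum_congr rfl fun j hj => ?_
      rw [hrerase j hj, abs_sub_comm, abs_of_nonneg (le_of_lt (hdiff j hj).1)]
    rw [h1, h2]
    have hε' : δ * (2 * (s.card + 1)) = ε := by
      rw [hδ]; field_simp
    nlinarith [hδpos]

variable {U : Type} [L.Structure U] {nx ny : ℕ}
  (φ : L.Formula (Fin nx ⊕ Fin ny)) (M : L.ElementarySubstructure U)

lemma main_approx47 (μ : KeislerMeasure U φ) (hfs : FinSat φ M μ)
    (J : Finset (TypeSpace M ny)) (ε : ℝ) (hε : 0 < ε) :
    ∃ g ∈ ratConv (FamilyF φ M), ∀ p ∈ J, |g p - FunMu φ M μ p| < ε := by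
  classical
  set w : Finset (TypeSpace M ny) → ℝ := fun K => μ.toFun (cell47 φ M J K) with hw
  have hwnn : ∀ K, 0 ≤ w K := fun K => μ.nonneg _ (cell47_alg φ M J K)
  set P : Finset (Finset (TypeSpace M ny)) := J.powerset.filter (fun K => 0 < w K) with hP
  have hfilt : ∀ (Q : Finset (Finset (TypeSpace M ny))),
      ∑ K ∈ Q.filter (fun K => 0 < w K), w K = ∑ K ∈ Q, w K := fun Q =>
    Finset.sum_filter_of_ne fun K _ h => lt_of_le_of_ne (hwnn K) (Ne.symm h)
  have hsum1 : ∑ K ∈ P, w K = 1 := by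
    rw [hP, hfilt]
    have h1 : μ.toFun Set.univ = ∑ K ∈ J.powerset, w K := by
      rw [partition47 φ M μ J Set.univ (phiAlg_univ φ)]
      exact Finset.sum_congr rfl fun K _ => by rw [Set.univ_inter]
    rw [← h1, μ.total]
  have hFunMu : ∀ p ∈ J, FunMu φ M μ p = ∑ K ∈ P.filter (fun K => p ∈ K), w K := by
    intro p hp
    have h1 : μ.toFun (phiSet φ (Quotient.out p)) =
        ∑ K ∈ J.powerset, μ.toFun (phiSet φ (Quotient.out p) ∩ cell47 φ M J K) :=
      partition47 φ M μ J _ (InPhiAlg.basic _)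
    have h2 : ∀ K ∈ J.powerset,
        μ.toFun (phiSet φ (Quotient.out p) ∩ cell47 φ M J K) = if p ∈ K then w K else 0 := by
      intro K _
      by_cases hpK : p ∈ K
      · rw [if_pos hpK]
        have : phiSet φ (Quotient.out p) ∩ cell47 φ M J K = cell47 φ M J K := by
          apply Set.inter_eq_self_of_subset_right
          intro a ha
          exact (ha p hp).mpr hpK
        rw [this]
      · rw [if_neg hpK]
        have : phiSet φ (Quotient.out p) ∩ cell47 φ M J K = ∅ := by
          ext a
          simp only [Set.mem_inter_iff, Set.mem_empty_iff_false, iff_false, not_and]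
          intro ha1 ha2
          exact hpK ((ha2 p hp).mp ha1)
        rw [this, mu_empty]
    have h3 : FunMu φ M μ p = ∑ K ∈ J.powerset.filter (fun K => p ∈ K), w K := by
      show μ.toFun (phiSet φ (Quotient.out p)) = _
      rw [h1, Finset.sum_congr rfl h2, ← Finset.sum_filter]
    rw [h3, hP, Finset.filter_comm, hfilt]
  -- choose witnesses in `M` for the cells of positive measure
  obtain ⟨a₀, -⟩ := hfs Set.univ (phiAlg_univ φ) (by rw [μ.total]; norm_num)
  have hch : ∀ K : Finset (TypeSpace M ny), ∃ aa : Fin nx → M,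
      K ∈ P → (fun i => (aa i : U)) ∈ cell47 φ M J K := by
    intro K
    by_cases hK : K ∈ P
    · obtain ⟨aa, haa⟩ := hfs (cell47 φ M J K) (cell47_alg φ M J K) ((Finset.mem_filter.mp hK).2)
      exact ⟨aa, fun _ => haa⟩
    · exact ⟨a₀, fun h => absurd h hK⟩
  choose a ha using hch
  have hPne : P.Nonempty := by
    rcases Finset.eq_empty_or_nonempty P with h | h
    · rw [h, Finset.sum_empty] at hsum1; norm_num at hsum1
    · exact h
  obtain ⟨r, hrpos, hrsum, hrapp⟩ :=
    ratApprox47 P hPne w (fun K hK => (Finset.mem_filter.mp hK).2) hsum1 ε hε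
  set g : TypeSpace M ny → ℝ := ∑ K ∈ P, ((r K : ℝ)) • FunF φ M (a K) with hg
  have htrans : ∀ {β : Type} [inst : AddCommMonoid β], ∀ F : Finset (TypeSpace M ny) → β,
      ∑ i : Fin P.card, F ((P.equivFin.symm i) : Finset (TypeSpace M ny)) = ∑ K ∈ P, F K := by
    intro β _ F
    rw [← Finset.sum_coe_sort P F]
    exact Equiv.sum_comp P.equivFin.symm (fun x => F (x : Finset (TypeSpace M ny)))
  refine ⟨g, ⟨P.card, fun i => r (P.equivFin.symm i), fun i => FunF φ M (a (P.equivFin.symm i)),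
      fun i => hrpos _ (P.equivFin.symm i).2, ?_, fun i => ⟨a _, rfl⟩, ?_⟩, ?_⟩
  · rw [htrans (fun K => ((r K : ℚ) : ℝ))]
    exact hrsum
  · rw [hg, htrans (fun K => ((r K : ℚ) : ℝ) • FunF φ M (a K))]
  · intro p hp
    have hgp1 : g p = ∑ K ∈ P, (if p ∈ K then ((r K : ℚ) : ℝ) else 0) := by
      rw [hg, Finset.sum_apply]
      refine Finset.sum_congr rfl fun K hK => ?_
      have := (ha K hK) p hp
      rw [Pi.smul_apply, smul_eq_mul, funF_eval47]
      by_cases hpK : p ∈ K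
      · rw [if_pos hpK, if_pos (this.mpr hpK), mul_one]
      · rw [if_neg hpK, if_neg (fun hr' => hpK (this.mp hr')), mul_zero]
    have hgp : g p = ∑ K ∈ P.filter (fun K => p ∈ K), ((r K : ℚ) : ℝ) :=
      hgp1.trans (Finset.sum_filter _ _).symm
    rw [hgp, hFunMu p hp, ← Finset.sum_sub_distrib]
    calc |∑ K ∈ P.filter (fun K => p ∈ K), (((r K : ℚ) : ℝ) - w K)|
        ≤ ∑ K ∈ P.filter (fun K => p ∈ K), |((r K : ℚ) : ℝ) - w K| :=
          Finset.abs_sum_le_sum_abs _ _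
      _ ≤ ∑ K ∈ P, |((r K : ℚ) : ℝ) - w K| :=
          Finset.sum_le_sum_of_subset_of_nonneg (Finset.filter_subset _ _)
            (fun K _ _ => abs_nonneg _)
      _ < ε := hrapp

end Aux47b

/-- **Proposition 4.7.** If `μ ∈ 𝔐_φ(U)` is finitely satisfiable over `M`, then `F_μ^φ`
lies in the closure of `conv_ℚ(𝔽_M^φ)` in `ℝ^{S_y(M)}` with the product topology. -/
theorem stmt_10
    {L : FirstOrder.Language.{0, 0}} (T : L.Theory) (hT : T.IsComplete)
    (hL : L.card ≤ Cardinal.aleph0)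
    {U : Type} [L.Structure U] [Nonempty U] (hUT : T.Model U)
    (κ : Cardinal.{0}) (hκ : Cardinal.aleph0 < κ) (hreg : κ.IsRegular)
    (hsat : IsSaturated L U κ) (hhom : IsStronglyHomogeneous L U κ)
    (M : L.ElementarySubstructure U) (hM : #M < κ)
    {nx ny : ℕ} (φ : L.Formula (Fin nx ⊕ Fin ny))    (μ : KeislerMeasure U φ)
    (hfs : FinSat φ M μ) :
    FunMu φ M μ ∈ closure (ratConv (FamilyF φ M)) := by
  classical
  rw [mem_closure_iff_nhds]
  intro t ht
  rw [nhds_pi, Filter.mem_pi'] at ht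
  obtain ⟨I, V, hV, hVt⟩ := ht
  choose δ hδ using fun p => Metric.mem_nhds_iff.mp (hV p)
  set ε : ℝ := if h : I.Nonempty then I.inf' h δ else 1 with hεdef
  have hεpos : 0 < ε := by
    rw [hεdef]
    split_ifs with h
    · exact (Finset.lt_inf'_iff h).mpr fun p _ => (hδ p).1
    · norm_num
  obtain ⟨g, hgmem, hgapp⟩ := main_approx47 φ M μ hfs I ε hεpos
  refine ⟨g, ?_, hgmem⟩
  apply hVt
  intro p hp
  have hpI : p ∈ I := hp
  apply (hδ p).2
  rw [Metric.mem_ball, Real.dist_eq]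
  have h1 : |g p - FunMu φ M μ p| < ε := hgapp p hpI
  have h2 : ε ≤ δ p := by
    rw [hεdef, dif_pos ⟨p, hpI⟩]
    exact Finset.inf'_le _ hpI
  linarith
end

section
/- Let T be a complete first-order theory in a countable language L, U a monster model of T (κ-saturated and strongly κ-homogeneous for a sufficiently large cardinal κ), M an elementary substructure of U with |M| < κ, and φ(x;y) a partitioned L-formula. If μ ∈ 𝔐_φ(U) is finitely approximable over M, then μ is generically stable over M. -/
open FirstOrder Cardinal Set Filter Topology

variable {L : FirstOrder.Language.{0, 0}}

/-! ### Auxiliary lemmas for stmt_13 -/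

/-- Every `G ∈ Δ_φ` is given by an actual `L`-formula. -/
theorem InDeltaPhi.exists_formula {U : Type} [L.Structure U] {nx ny : ℕ}
    {φ : L.Formula (Fin nx ⊕ Fin ny)} {k : ℕ} {G : (Fin k → Fin ny → U) → Set (Fin nx → U)}
    (h : InDeltaPhi φ k G) :
    ∃ θ : L.Formula (Fin nx ⊕ (Fin k × Fin ny)),
      ∀ (bs : Fin k → Fin ny → U) (a : Fin nx → U),
        a ∈ G bs ↔ θ.Realize (Sum.elim a (fun q => bs q.1 q.2)) := by
  induction h with
  | inst j =>
    refine ⟨φ.relabel (Sum.map id (fun i => (j, i))), fun bs a => ?_⟩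
    rw [FirstOrder.Language.Formula.realize_relabel]
    have : (Sum.elim a (fun q : Fin k × Fin ny => bs q.1 q.2)) ∘
        (Sum.map id (fun i => (j, i))) = Sum.elim a (bs j) := by
      funext x; cases x <;> rfl
    rw [this]
    rfl
  | empty =>
    exact ⟨⊥, fun bs a => by simp [FirstOrder.Language.Formula.realize_bot]⟩
  | compl _ ih =>
    obtain ⟨θ, hθ⟩ := ih
    exact ⟨θ.not, fun bs a => by
      simp [FirstOrder.Language.Formula.realize_not, ← hθ bs a, Set.mem_compl_iff]⟩
  | union _ _ ih1 ih2 =>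
    obtain ⟨θ1, hθ1⟩ := ih1
    obtain ⟨θ2, hθ2⟩ := ih2
    exact ⟨θ1 ⊔ θ2, fun bs a => by
      simp [FirstOrder.Language.Formula.realize_sup, ← hθ1 bs a, ← hθ2 bs a,
        Set.mem_union]⟩

/-- `Δ_φ` is closed under reindexing parameters. -/
theorem InDeltaPhi.reindex {U : Type} [L.Structure U] {nx ny : ℕ}
    {φ : L.Formula (Fin nx ⊕ Fin ny)} {k : ℕ} {G : (Fin k → Fin ny → U) → Set (Fin nx → U)}
    (h : InDeltaPhi φ k G) {k' : ℕ} (f : Fin k → Fin k') :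
    InDeltaPhi φ k' (fun bs => G (fun i => bs (f i))) := by
  induction h with
  | inst j => exact InDeltaPhi.inst k' (f j)
  | empty => exact InDeltaPhi.empty k'
  | compl _ ih => exact InDeltaPhi.compl ih
  | union _ _ ih1 ih2 => exact InDeltaPhi.union ih1 ih2

/-- Every set in `Def_φ(U)` is an instance of some `θ ∈ Δ_φ`. -/
theorem InPhiAlg.exists_delta {U : Type} [L.Structure U] {nx ny : ℕ}
    {φ : L.Formula (Fin nx ⊕ Fin ny)} {s : Set (Fin nx → U)} (h : InPhiAlg φ s) :
    ∃ (k : ℕ) (G : (Fin k → Fin ny → U) → Set (Fin nx → U)) (bs : Fin k → Fin ny → U),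
      InDeltaPhi φ k G ∧ G bs = s := by
  induction h with
  | basic b =>
    exact ⟨1, fun bs => phiSet φ (bs 0), fun _ => b, InDeltaPhi.inst 1 0, rfl⟩
  | empty => exact ⟨0, fun _ => ∅, Fin.elim0, InDeltaPhi.empty 0, rfl⟩
  | compl _ ih =>
    obtain ⟨k, G, bs, hG, hGs⟩ := ih
    exact ⟨k, fun bs => (G bs)ᶜ, bs, InDeltaPhi.compl hG, congrArg _ hGs⟩
  | union _ _ ih1 ih2 =>
    obtain ⟨k1, G1, bs1, hG1, hG1s⟩ := ih1
    obtain ⟨k2, G2, bs2, hG2, hG2s⟩ := ih2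
    refine ⟨k1 + k2,
      fun bs => G1 (fun i => bs (Fin.castAdd k2 i)) ∪ G2 (fun i => bs (Fin.natAdd k1 i)),
      Fin.append bs1 bs2,
      InDeltaPhi.union (hG1.reindex _) (hG2.reindex _), ?_⟩
    have h1 : (fun i => Fin.append bs1 bs2 (Fin.castAdd k2 i)) = bs1 := by
      funext i; exact Fin.append_left bs1 bs2 i
    have h2 : (fun i => Fin.append bs1 bs2 (Fin.natAdd k1 i)) = bs2 := by
      funext i; exact Fin.append_right bs1 bs2 i
    simp only [h1, h2, hG1s, hG2s]

/-- **Proposition 4.13(v).** If `μ ∈ 𝔐_φ(U)` is finitely approximable over `M`, then `μ`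
is generically stable over `M`. -/
theorem stmt_13
    {L : FirstOrder.Language.{0, 0}} (T : L.Theory) (hT : T.IsComplete)
    (hL : L.card ≤ Cardinal.aleph0)
    {U : Type} [L.Structure U] [Nonempty U] (hUT : T.Model U)
    (κ : Cardinal.{0}) (hκ : Cardinal.aleph0 < κ) (hreg : κ.IsRegular)
    (hsat : IsSaturated L U κ) (hhom : IsStronglyHomogeneous L U κ)
    (M : L.ElementarySubstructure U) (hM : #M < κ)
    {nx ny : ℕ} (φ : L.Formula (Fin nx ⊕ Fin ny))    (μ : KeislerMeasure U φ)
    (hfa : FinApprox φ M μ) :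
    GenericallyStable φ M μ := by
  classical
  constructor
  · -- Definable over M
    intro k G hG ε hε
    obtain ⟨n, hn, a, happrox⟩ := hfa k G hG (ε/3) (by linarith)
    obtain ⟨θ, hθ⟩ := hG.exists_formula
    -- the formula θ(a_i; ȳ) with x-variables replaced by the parameter a_i
    set pe : Fin n × Fin nx ≃ Fin (n * nx) := finProdFinEquiv
    set c : Fin (n * nx) → M := fun t => a (pe.symm t).1 (pe.symm t).2 with hc
    set θi : Fin n → L.Formula ((Fin k × Fin ny) ⊕ Fin (n * nx)) :=
      fun i => θ.relabel (Sum.elim (fun q => Sum.inr (pe (i, q))) Sum.inl) with hθi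
    have key : ∀ (i : Fin n) (bs : Fin k → Fin ny → U),
        (θi i).Realize (Sum.elim (fun q : Fin k × Fin ny => bs q.1 q.2)
          (fun t => (c t : U))) ↔ (fun q => (a i q : U)) ∈ G bs := by
      intro i bs
      rw [hθi, FirstOrder.Language.Formula.realize_relabel]
      have : (Sum.elim (fun q : Fin k × Fin ny => bs q.1 q.2) (fun t => (c t : U))) ∘
          (Sum.elim (fun q => Sum.inr (pe (i, q))) Sum.inl) =
          Sum.elim (fun q => (a i q : U)) (fun q : Fin k × Fin ny => bs q.1 q.2) := by
        funext x
        cases x with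
        | inl q => simp [hc]
        | inr p => rfl
      rw [this, ← hθ bs]
    -- the partition, indexed by truth vectors
    set eqv : (Fin n → Bool) ≃ Fin (Fintype.card (Fin n → Bool)) :=
      Fintype.equivFin (Fin n → Bool)
    set ρ : Fin (Fintype.card (Fin n → Bool)) →
        L.Formula ((Fin k × Fin ny) ⊕ Fin (n * nx)) :=
      fun i => FirstOrder.Language.BoundedFormula.iInf
        (fun t : Fin n => if (eqv.symm i) t then θi t else (θi t).not) with hρ
    have keyρ : ∀ (i : Fin (Fintype.card (Fin n → Bool))) (bs : Fin k → Fin ny → U),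
        (ρ i).Realize (Sum.elim (fun q : Fin k × Fin ny => bs q.1 q.2)
          (fun t => (c t : U))) ↔
        ∀ t : Fin n, ((fun q => (a t q : U)) ∈ G bs ↔ (eqv.symm i) t = true) := by
      intro i bs
      rw [hρ]
      simp only [FirstOrder.Language.Formula.Realize,
        FirstOrder.Language.BoundedFormula.realize_iInf]
      constructor
      · intro h t
        have := h t
        by_cases hS : (eqv.symm i) t = true
        · rw [hS, if_pos rfl] at this
          exact ⟨fun _ => hS, fun _ => (key t bs).mp this⟩
        · rw [if_neg (by simp_all)] at this
          rw [FirstOrder.Language.BoundedFormula.realize_not] at this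
          constructor
          · intro hmem; exact absurd ((key t bs).mpr hmem) this
          · intro h'; exact absurd h' hS
      · intro h t
        by_cases hS : (eqv.symm i) t = true
        · rw [hS]; simp only [if_pos]
          exact (key t bs).mpr ((h t).mpr hS)
        · rw [if_neg (by simp_all)]
          rw [FirstOrder.Language.BoundedFormula.realize_not]
          intro hreal
          exact hS ((h t).mp ((key t bs).mp hreal))
    refine ⟨Fintype.card (Fin n → Bool), n * nx, ρ, c, ?_, ?_⟩
    · intro bs
      set S : Fin n → Bool := fun t => decide ((fun q => (a t q : U)) ∈ G bs) with hS
      refine ⟨eqv S, ?_, ?_⟩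
      · refine (keyρ (eqv S) bs).mpr ?_
        intro t
        rw [Equiv.symm_apply_apply, hS]
        simp
      · intro i' hi'
        have hi2 := (keyρ i' bs).mp hi'
        have heq : eqv.symm i' = S := by
          funext t
          have ht := hi2 t
          rw [hS]
          by_cases hm : (fun q => (a t q : U)) ∈ G bs
          · rw [ht.mp hm]; simp [hm]
          · cases hb : (eqv.symm i') t
            · simp [hm]
            · exact absurd (ht.mpr hb) hm
        rw [← heq, Equiv.apply_symm_apply]
    · intro i e e' he he'
      rw [keyρ] at he he'
      have hAv : Av (fun t q => (a t q : U)) (G e) = Av (fun t q => (a t q : U)) (G e') := by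
        unfold Av
        congr 1
        apply Finset.sum_congr rfl
        intro t _
        have : (fun q => (a t q : U)) ∈ G e ↔ (fun q => (a t q : U)) ∈ G e' :=
          (he t).trans (he' t).symm
        by_cases hm : (fun q => (a t q : U)) ∈ G e
        · rw [Set.indicator_of_mem hm, Set.indicator_of_mem (this.mp hm)]
        · rw [Set.indicator_of_notMem hm,
            Set.indicator_of_notMem (fun h' => hm (this.mpr h'))]
      have h1 := happrox e
      have h2 := happrox e'
      rw [hAv] at h1
      calc |μ.toFun (G e) - μ.toFun (G e')| ≤
          |μ.toFun (G e) - Av (fun t q => (a t q : U)) (G e')| +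
          |Av (fun t q => (a t q : U)) (G e') - μ.toFun (G e')| :=
            abs_sub_le _ _ _
        _ < ε/3 + ε/3 := add_lt_add h1 (by rw [abs_sub_comm]; exact h2)
        _ < ε := by linarith
  · -- Finitely satisfiable over M
    intro s hs hpos
    obtain ⟨k, G, bs, hG, hGs⟩ := hs.exists_delta
    obtain ⟨n, hn, a, happrox⟩ := hfa k G hG (μ.toFun s) hpos
    have h := happrox bs
    rw [hGs] at h
    have hAvpos : 0 < Av (fun i q => (a i q : U)) s := by
      by_contra hle
      push_neg at hle
      have : |μ.toFun s - Av (fun i q => (a i q : U)) s| ≥ μ.toFun s := by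
        rw [abs_sub_comm, abs_of_nonpos (by linarith)]
        linarith
      linarith
    have : ∃ i : Fin n, (fun q => (a i q : U)) ∈ s := by
      by_contra hno
      push_neg at hno
      have : Av (fun i q => (a i q : U)) s = 0 := by
        unfold Av
        rw [Finset.sum_eq_zero, zero_div]
        intro i _
        exact Set.indicator_of_notMem (hno i) _
      linarith
    obtain ⟨i, hi⟩ := this
    exact ⟨a i, hi⟩
end

section
/- Let T be a complete first-order theory in a countable language L, U a monster model of T (κ-saturated and strongly κ-homogeneous for a sufficiently large cardinal κ), φ(x;y) a partitioned L-formula, and M ≺ N elementary substructures of U with |N| < κ. Let μ ∈ 𝔐_φ(U). If μ is finitely satisfiable over N and μ is M-invariant, then μ is finitely satisfiable over M. -/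
open FirstOrder Cardinal Set Filter Topology

variable {L : FirstOrder.Language.{0, 0}}

open FirstOrder.Language in
/-- Every set in `Def_φ(U)` is defined by a single formula with a finite parameter tuple. -/
lemma inPhiAlg_exists_formula {U : Type} [L.Structure U] {nx ny : ℕ}
    (φ : L.Formula (Fin nx ⊕ Fin ny))
    {s : Set (Fin nx → U)} (hs : InPhiAlg φ s) :
    ∃ (K : ℕ) (c : Fin K → U) (Θ : L.Formula (Fin nx ⊕ Fin K)),
      s = {a | Θ.Realize (Sum.elim a c)} := by
  induction hs with
  | basic b => exact ⟨ny, b, φ, rfl⟩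
  | empty =>
      refine ⟨0, Fin.elim0, ⊥, ?_⟩
      ext a
      simp [Formula.Realize]
  | compl _ ih =>
      obtain ⟨K, c, Θ, rfl⟩ := ih
      exact ⟨K, c, Θ.not, by ext a; simp⟩
  | union _ _ ih1 ih2 =>
      obtain ⟨K1, c1, Θ1, rfl⟩ := ih1
      obtain ⟨K2, c2, Θ2, rfl⟩ := ih2
      refine ⟨K1 + K2, Fin.append c1 c2,
        (Θ1.relabel (Sum.map id (Fin.castAdd K2))) ⊔
          (Θ2.relabel (Sum.map id (Fin.natAdd K1))), ?_⟩
      ext a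
      have e1 : (Sum.elim a (Fin.append c1 c2)) ∘ (Sum.map id (Fin.castAdd K2))
          = Sum.elim a c1 := by
        funext x
        cases x with
        | inl k => rfl
        | inr k => simp [Fin.append_left]
      have e2 : (Sum.elim a (Fin.append c1 c2)) ∘ (Sum.map id (Fin.natAdd K1))
          = Sum.elim a c2 := by
        funext x
        cases x with
        | inl k => rfl
        | inr k => simp [Fin.append_right]
      simp only [Set.mem_union, Set.mem_setOf_eq, Formula.realize_sup,
        Formula.realize_relabel, e1, e2]

open FirstOrder.Language in
/-- The image of a formula-defined set under an automorphism. -/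
lemma image_setOf_formula {U : Type} [L.Structure U] (σ : U ≃[L] U) {nx K : ℕ}
    (Θ : L.Formula (Fin nx ⊕ Fin K)) (c : Fin K → U) :
    (fun a : Fin nx → U => (σ : U → U) ∘ a) '' {x | Θ.Realize (Sum.elim x c)}
      = {x | Θ.Realize (Sum.elim x ((σ : U → U) ∘ c))} := by
  ext x
  constructor
  · rintro ⟨a, ha, rfl⟩
    have h1 := (σ.toElementaryEmbedding.map_formula Θ (Sum.elim a c)).mpr ha
    have hcomp : (σ.toElementaryEmbedding : U → U) ∘ Sum.elim a c
        = Sum.elim ((σ : U → U) ∘ a) ((σ : U → U) ∘ c) := by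
      funext y; cases y <;> rfl
    rwa [hcomp] at h1
  · intro hx
    refine ⟨(σ.symm : U → U) ∘ x, ?_, ?_⟩
    · have hcomp : (σ.toElementaryEmbedding : U → U) ∘
          Sum.elim ((σ.symm : U → U) ∘ x) c
          = Sum.elim x ((σ : U → U) ∘ c) := by
        funext y
        cases y with
        | inl k => simp
        | inr k => rfl
      have h1 := (σ.toElementaryEmbedding.map_formula Θ
        (Sum.elim ((σ.symm : U → U) ∘ x) c))
      rw [hcomp] at h1
      exact h1.mp hx
    · funext i; simp

/-- The map `a ↦ σ ∘ a` is bijective. -/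
lemma comp_equiv_bijective {U : Type} [L.Structure U] (σ : U ≃[L] U) (nx : ℕ) :
    Function.Bijective (fun a : Fin nx → U => (σ : U → U) ∘ a) := by
  constructor
  · intro a b h
    funext i
    exact σ.injective (congrFun h i)
  · intro b
    exact ⟨(σ.symm : U → U) ∘ b, by funext i; simp⟩

/-- `Def_φ(U)` is closed under images of automorphisms. -/
lemma inPhiAlg_image {U : Type} [L.Structure U] {nx ny : ℕ}
    (φ : L.Formula (Fin nx ⊕ Fin ny)) (σ : U ≃[L] U)
    {s : Set (Fin nx → U)} (hs : InPhiAlg φ s) :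
    InPhiAlg φ ((fun a : Fin nx → U => (σ : U → U) ∘ a) '' s) := by
  induction hs with
  | basic b =>
      have h : phiSet φ b = {x | φ.Realize (Sum.elim x b)} := rfl
      rw [h, image_setOf_formula]
      exact InPhiAlg.basic _
  | empty => rw [Set.image_empty]; exact InPhiAlg.empty
  | compl _ ih =>
      rw [Set.image_compl_eq (comp_equiv_bijective σ nx)]
      exact InPhiAlg.compl ih
  | union _ _ ih1 ih2 =>
      rw [Set.image_union]
      exact InPhiAlg.union ih1 ih2

open FirstOrder.Language in
/-- Two tuples with the same type over `M` satisfy the same formulas with free variables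
indexed by `M ⊕ Fin K`. -/
lemma sameTypeOver_realize {U : Type} [L.Structure U] (M : L.ElementarySubstructure U)
    {K : ℕ} {c b' : Fin K → U} (h : SameTypeOver M c b') (ψ : L.Formula (↥M ⊕ Fin K)) :
    ψ.Realize (Sum.elim (fun m : M => (m : U)) c) ↔
      ψ.Realize (Sum.elim (fun m : M => (m : U)) b') := by
  classical
  set fv : Finset (↥M ⊕ Fin K) := ψ.freeVarFinset with hfv
  have hsub : ↑fv ⊆ (↑fv : Set (↥M ⊕ Fin K)) := subset_rfl
  set χ := ψ.restrictFreeVar (Set.inclusion hsub) with hχ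
  set t : Finset (↥M) := fv.preimage Sum.inl Sum.inl_injective.injOn with ht
  set j := t.card with hj
  set eqv : ↥t ≃ Fin j := t.equivFin with heqv
  have memt : ∀ {m : ↥M}, Sum.inl m ∈ (↑fv : Set (↥M ⊕ Fin K)) → m ∈ t := by
    intro m hm
    rw [ht, Finset.mem_preimage]
    exact hm
  set ρ : (↑fv : Set (↥M ⊕ Fin K)) → Fin K ⊕ Fin j :=
    fun x => match x with
      | ⟨Sum.inl m, hm⟩ => Sum.inr (eqv ⟨m, memt hm⟩)
      | ⟨Sum.inr k, _⟩ => Sum.inl k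
    with hρ
  set w : Fin j → ↥M := fun i => ((eqv.symm i : ↥t) : ↥M) with hw
  have key : ∀ d : Fin K → U,
      ((Sum.elim d (fun i => ((w i : U))) : Fin K ⊕ Fin j → U) ∘ ρ)
        = (Sum.elim (fun m : M => (m : U)) d) ∘ (Subtype.val) := by
    intro d
    funext x
    obtain ⟨x, hx⟩ := x
    cases x with
    | inl m =>
        have hwm : w (eqv ⟨m, memt hx⟩) = m := by
          rw [hw]; simp
        simp [hρ, hwm]
    | inr k => simp [hρ]
  have hreal : ∀ d : Fin K → U,
      (ψ.Realize (Sum.elim (fun m : M => (m : U)) d) ↔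
        (Formula.relabel ρ χ).Realize (Sum.elim d (fun i => ((w i : U))))) := by
    intro d
    rw [Formula.realize_relabel, key d]
    exact (BoundedFormula.realize_restrictFreeVar' hsub).symm
  rw [hreal c, hreal b']
  exact h j (Formula.relabel ρ χ) w

open FirstOrder.Language in
/-- Existence of an heir-like realization: `b'` has the same type as `c` over `M`,
and every formula with parameters from `N` satisfied by `b'` reflects to a formula with
parameters from `M` satisfied by `c`. -/
lemma heir_exists {U : Type} [L.Structure U] [Nonempty U]
    {κ : Cardinal} (hsat : IsSaturated L U κ)
    (M N : L.ElementarySubstructure U) (hMN : M.toSubstructure ≤ N.toSubstructure)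
    (hN : #N < κ) {K : ℕ} (c : Fin K → U) :
    ∃ b' : Fin K → U, SameTypeOver M c b' ∧
      ∀ (j : ℕ) (ψ : L.Formula (Fin K ⊕ Fin j)) (n : Fin j → N),
        ψ.Realize (Sum.elim b' (fun i => (n i : U))) →
        ∃ m : Fin j → M, ψ.Realize (Sum.elim c (fun i => (m i : U))) := by
  classical
  set val : ↥N → U := fun x => (x : U) with hval
  have hMsub : ∀ m : ↥M, (m : U) ∈ N := fun m => hMN m.2
  set inclMN : ↥M → ↥N := fun m => ⟨(m : U), hMsub m⟩ with hincl
  set S₁ : Set (L.Formula (Fin K ⊕ ↥N)) :=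
    {ψ | ∃ (j : ℕ) (χ : L.Formula (Fin K ⊕ Fin j)) (m : Fin j → ↥M),
      ψ = χ.relabel (Sum.map id (inclMN ∘ m)) ∧
      χ.Realize (Sum.elim c (fun i => ((m i : U))))} with hS₁
  set S₂ : Set (L.Formula (Fin K ⊕ ↥N)) :=
    {ψ | ∃ (j : ℕ) (χ : L.Formula (Fin K ⊕ Fin j)) (n : Fin j → ↥N),
      ψ = χ.not.relabel (Sum.map id n) ∧
      ∀ m : Fin j → ↥M, ¬ χ.Realize (Sum.elim c (fun i => ((m i : U))))} with hS₂
  have hfinsat : ∀ sfin : Finset (L.Formula (Fin K ⊕ ↥N)), ↑sfin ⊆ S₁ ∪ S₂ →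
      ∃ a : Fin K → U, ∀ ψ ∈ sfin, ψ.Realize (Sum.elim a val) := by
    intro sfin hsub
    set s2 : Finset (L.Formula (Fin K ⊕ ↥N)) := sfin.filter (· ∈ S₂) with hs2
    set s1 : Finset (L.Formula (Fin K ⊕ ↥N)) := sfin.filter (· ∉ S₂) with hs1
    have hs1S₁ : ∀ ψ ∈ s1, ψ ∈ S₁ := by
      intro ψ hψ
      have hψ' := Finset.mem_filter.mp hψ
      rcases hsub hψ'.1 with h | h
      · exact h
      · exact absurd h hψ'.2
    have hs2S₂ : ∀ t : {ψ // ψ ∈ s2}, (t : L.Formula (Fin K ⊕ ↥N)) ∈ S₂ := by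
      intro t
      exact (Finset.mem_filter.mp t.2).2
    set jf : {ψ // ψ ∈ s2} → ℕ := fun t => (hs2S₂ t).choose with hjf
    set χf : ∀ t : {ψ // ψ ∈ s2}, L.Formula (Fin K ⊕ Fin (jf t)) :=
      fun t => (hs2S₂ t).choose_spec.choose with hχf
    set nf : ∀ t : {ψ // ψ ∈ s2}, Fin (jf t) → ↥N :=
      fun t => (hs2S₂ t).choose_spec.choose_spec.choose with hnf
    have propf : ∀ t : {ψ // ψ ∈ s2},
        (t : L.Formula (Fin K ⊕ ↥N)) = (χf t).not.relabel (Sum.map id (nf t)) ∧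
        ∀ m : Fin (jf t) → ↥M, ¬ (χf t).Realize (Sum.elim c (fun i => ((m i : U)))) :=
      fun t => (hs2S₂ t).choose_spec.choose_spec.choose_spec
    have hs1S₁' : ∀ t : {ψ // ψ ∈ s1}, (t : L.Formula (Fin K ⊕ ↥N)) ∈ S₁ :=
      fun t => hs1S₁ t t.2
    set j1 : {ψ // ψ ∈ s1} → ℕ := fun t => (hs1S₁' t).choose with hj1
    set χ1 : ∀ t : {ψ // ψ ∈ s1}, L.Formula (Fin K ⊕ Fin (j1 t)) :=
      fun t => (hs1S₁' t).choose_spec.choose with hχ1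
    set m1 : ∀ t : {ψ // ψ ∈ s1}, Fin (j1 t) → ↥M :=
      fun t => (hs1S₁' t).choose_spec.choose_spec.choose with hm1
    have prop1 : ∀ t : {ψ // ψ ∈ s1},
        (t : L.Formula (Fin K ⊕ ↥N)) = (χ1 t).relabel (Sum.map id (inclMN ∘ m1 t)) ∧
        (χ1 t).Realize (Sum.elim c (fun i => ((m1 t i : U)))) :=
      fun t => (hs1S₁' t).choose_spec.choose_spec.choose_spec
    have real1 : ∀ (t : {ψ // ψ ∈ s1}) (a : Fin K → U),
        (t : L.Formula (Fin K ⊕ ↥N)).Realize (Sum.elim a val) ↔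
          (χ1 t).Realize (Sum.elim a (fun i => ((m1 t i : U)))) := by
      intro t a
      rw [(prop1 t).1, Formula.realize_relabel]
      have hc : (Sum.elim a val) ∘ (Sum.map id (inclMN ∘ m1 t))
          = Sum.elim a (fun i => ((m1 t i : U))) := by
        funext x; cases x <;> rfl
      rw [hc]
    have real2 : ∀ (t : {ψ // ψ ∈ s2}) (a : Fin K → U),
        (t : L.Formula (Fin K ⊕ ↥N)).Realize (Sum.elim a val) ↔
          ¬ (χf t).Realize (Sum.elim a (fun i => val (nf t i))) := by
      intro t a
      rw [(propf t).1, Formula.realize_relabel]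
      have hc : (Sum.elim a val) ∘ (Sum.map id (nf t))
          = Sum.elim a (fun i => val (nf t i)) := by
        funext x; cases x <;> rfl
      rw [hc]
      exact Formula.realize_not
    by_contra hcon
    push_neg at hcon
    have hstep : ∀ a : Fin K → U,
        (∀ t : {ψ // ψ ∈ s1}, (χ1 t).Realize (Sum.elim a (fun i => ((m1 t i : U))))) →
        ∃ t : {ψ // ψ ∈ s2}, (χf t).Realize (Sum.elim a (fun i => val (nf t i))) := by
      intro a h1
      obtain ⟨ψ, hψ, hnr⟩ := hcon a
      by_cases h2 : ψ ∈ S₂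
      · have hψ2 : ψ ∈ s2 := Finset.mem_filter.mpr ⟨hψ, h2⟩
        refine ⟨⟨ψ, hψ2⟩, ?_⟩
        by_contra hnot
        exact hnr ((real2 ⟨ψ, hψ2⟩ a).mpr hnot)
      · have hψ1 : ψ ∈ s1 := Finset.mem_filter.mpr ⟨hψ, h2⟩
        exact absurd ((real1 ⟨ψ, hψ1⟩ a).mpr (h1 ⟨ψ, hψ1⟩)) hnr
    set β := Σ t : {ψ // ψ ∈ s1}, Fin (j1 t) with hβ
    set γ := Σ t : {ψ // ψ ∈ s2}, Fin (jf t) with hγ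
    set ρ1 : ∀ t : {ψ // ψ ∈ s1}, Fin K ⊕ Fin (j1 t) → (β ⊕ γ) ⊕ Fin K :=
      fun t => Sum.elim (fun k => Sum.inr k) (fun v => Sum.inl (Sum.inl ⟨t, v⟩)) with hρ1
    set ρ2 : ∀ t : {ψ // ψ ∈ s2}, Fin K ⊕ Fin (jf t) → (β ⊕ γ) ⊕ Fin K :=
      fun t => Sum.elim (fun k => Sum.inr k) (fun v => Sum.inl (Sum.inr ⟨t, v⟩)) with hρ2
    set lhs : L.Formula ((β ⊕ γ) ⊕ Fin K) :=
      BoundedFormula.iInf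
        (fun t : {ψ // ψ ∈ s1} => Formula.relabel (ρ1 t) (χ1 t)) with hlhs
    set rhs : L.Formula ((β ⊕ γ) ⊕ Fin K) :=
      BoundedFormula.iSup
        (fun t : {ψ // ψ ∈ s2} => Formula.relabel (ρ2 t) (χf t)) with hrhs
    set inner : L.Formula ((β ⊕ γ) ⊕ Fin K) := lhs.imp rhs with hinner
    set Ξ : L.Formula (β ⊕ γ) := inner.iAlls (Fin K) with hΞd
    set Ξex : L.Formula β := Ξ.iExs γ with hΞexd
    have hinner_real : ∀ (W : Type) (_ : L.Structure W) (V : (β ⊕ γ) → W) (a : Fin K → W),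
        (inner.Realize (Sum.elim V a) ↔
          ((∀ t : {ψ // ψ ∈ s1},
              (χ1 t).Realize (Sum.elim a (fun v => V (Sum.inl ⟨t, v⟩)))) →
            ∃ t : {ψ // ψ ∈ s2},
              (χf t).Realize (Sum.elim a (fun v => V (Sum.inr ⟨t, v⟩))))) := by
      intro W _ V a
      rw [hinner, Formula.realize_imp]
      have hl : lhs.Realize (Sum.elim V a) ↔
          ∀ t : {ψ // ψ ∈ s1},
            (χ1 t).Realize (Sum.elim a (fun v => V (Sum.inl ⟨t, v⟩))) := by
        rw [hlhs]
        show BoundedFormula.Realize _ _ _ ↔ _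
        rw [BoundedFormula.realize_iInf]
        have hcomp : ∀ t : {ψ // ψ ∈ s1}, (Sum.elim V a) ∘ (ρ1 t)
            = Sum.elim a (fun v => V (Sum.inl ⟨t, v⟩)) := by
          intro t; funext x; cases x <;> rfl
        constructor
        · intro hh t
          have := hh t
          rw [show BoundedFormula.Realize (Formula.relabel (ρ1 t) (χ1 t))
              (Sum.elim V a) default =
              (Formula.relabel (ρ1 t) (χ1 t)).Realize (Sum.elim V a) from rfl,
            Formula.realize_relabel, hcomp t] at this
          exact this
        · intro hh t
          rw [show BoundedFormula.Realize (Formula.relabel (ρ1 t) (χ1 t))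
              (Sum.elim V a) default =
              (Formula.relabel (ρ1 t) (χ1 t)).Realize (Sum.elim V a) from rfl,
            Formula.realize_relabel, hcomp t]
          exact hh t
      have hr : rhs.Realize (Sum.elim V a) ↔
          ∃ t : {ψ // ψ ∈ s2},
            (χf t).Realize (Sum.elim a (fun v => V (Sum.inr ⟨t, v⟩))) := by
        rw [hrhs]
        show BoundedFormula.Realize _ _ _ ↔ _
        rw [BoundedFormula.realize_iSup]
        have hcomp : ∀ t : {ψ // ψ ∈ s2}, (Sum.elim V a) ∘ (ρ2 t)
            = Sum.elim a (fun v => V (Sum.inr ⟨t, v⟩)) := by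
          intro t; funext x; cases x <;> rfl
        constructor
        · rintro ⟨t, hh⟩
          refine ⟨t, ?_⟩
          rw [show BoundedFormula.Realize (Formula.relabel (ρ2 t) (χf t))
              (Sum.elim V a) default =
              (Formula.relabel (ρ2 t) (χf t)).Realize (Sum.elim V a) from rfl,
            Formula.realize_relabel, hcomp t] at hh
          exact hh
        · rintro ⟨t, hh⟩
          refine ⟨t, ?_⟩
          rw [show BoundedFormula.Realize (Formula.relabel (ρ2 t) (χf t))
              (Sum.elim V a) default =
              (Formula.relabel (ρ2 t) (χf t)).Realize (Sum.elim V a) from rfl,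
            Formula.realize_relabel, hcomp t]
          exact hh
      rw [hl, hr]
    set vβU : β → U := fun x => ((m1 x.1 x.2 : U)) with hvβU
    set vγU : γ → U := fun x => val (nf x.1 x.2) with hvγU
    set vβM : β → ↥M := fun x => m1 x.1 x.2 with hvβM
    have hΞU : Ξ.Realize (Sum.elim vβU vγU) := by
      rw [hΞd, Formula.realize_iAlls]
      intro a
      have he : (fun x : (β ⊕ γ) ⊕ Fin K => Sum.elim (Sum.elim vβU vγU) a (id x))
          = Sum.elim (Sum.elim vβU vγU) a := by funext x; rfl
      rw [hinner_real U _ (Sum.elim vβU vγU) a]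
      intro h1
      exact hstep a h1
    have hΞexU : Ξex.Realize vβU := by
      rw [hΞexd, Formula.realize_iExs]
      refine ⟨vγU, ?_⟩
      have he : (fun x : β ⊕ γ => Sum.elim vβU vγU (id x)) = Sum.elim vβU vγU := by
        funext x; rfl
      exact hΞU
    have hcoe : (fun m : ↥M => (m : U)) ∘ vβM = vβU := by funext x; rfl
    have hΞexM : Ξex.Realize vβM := by
      have hmf := (M.subtype.map_formula Ξex vβM)
      rw [ElementarySubstructure.coe_subtype] at hmf
      rw [← hmf, hcoe]
      exact hΞexU
    rw [hΞexd, Formula.realize_iExs] at hΞexM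
    obtain ⟨wM, hwM⟩ := hΞexM
    have heta : (fun x : β ⊕ γ => Sum.elim vβM wM (id x)) = Sum.elim vβM wM := by
      funext x; rfl
    have hΞU' : Ξ.Realize ((fun m : ↥M => (m : U)) ∘ Sum.elim vβM wM) := by
      have hmf := (M.subtype.map_formula Ξ (Sum.elim vβM wM))
      rw [ElementarySubstructure.coe_subtype] at hmf
      exact hmf.mpr hwM
    have hsplit : (fun m : ↥M => (m : U)) ∘ Sum.elim vβM wM
        = Sum.elim vβU ((fun m : ↥M => (m : U)) ∘ wM) := by
      funext x; cases x <;> rfl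
    rw [hsplit, hΞd, Formula.realize_iAlls] at hΞU'
    have hΞc := hΞU' c
    have he : (fun x : (β ⊕ γ) ⊕ Fin K =>
        Sum.elim (Sum.elim vβU ((fun m : ↥M => (m : U)) ∘ wM)) c (id x))
        = Sum.elim (Sum.elim vβU ((fun m : ↥M => (m : U)) ∘ wM)) c := by funext x; rfl
    rw [hinner_real U _ _ c] at hΞc
    have hlhs_holds : ∀ t : {ψ // ψ ∈ s1},
        (χ1 t).Realize (Sum.elim c
          (fun v => Sum.elim vβU ((fun m : ↥M => (m : U)) ∘ wM) (Sum.inl ⟨t, v⟩))) := by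
      intro t
      exact (prop1 t).2
    obtain ⟨t, ht⟩ := hΞc hlhs_holds
    exact (propf t).2 (fun v => wM ⟨t, v⟩) ht
  obtain ⟨b', hb'⟩ := hsat (↥N) hN val K (S₁ ∪ S₂) hfinsat
  have hb1 : ∀ ψ ∈ S₁, ψ.Realize (Sum.elim b' val) := fun ψ hψ => hb' ψ (Or.inl hψ)
  have hb2 : ∀ ψ ∈ S₂, ψ.Realize (Sum.elim b' val) := fun ψ hψ => hb' ψ (Or.inr hψ)
  have transfer1 : ∀ (j : ℕ) (χ : L.Formula (Fin K ⊕ Fin j)) (m : Fin j → ↥M),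
      χ.Realize (Sum.elim c (fun i => ((m i : U)))) →
      χ.Realize (Sum.elim b' (fun i => ((m i : U)))) := by
    intro j χ m hc
    have hmem : χ.relabel (Sum.map id (inclMN ∘ m)) ∈ S₁ := ⟨j, χ, m, rfl, hc⟩
    have := hb1 _ hmem
    rw [Formula.realize_relabel] at this
    have hcomp : (Sum.elim b' val) ∘ (Sum.map id (inclMN ∘ m))
        = Sum.elim b' (fun i => ((m i : U))) := by
      funext x; cases x <;> rfl
    rwa [hcomp] at this
  refine ⟨b', ?_, ?_⟩
  · intro j χ m
    constructor
    · exact transfer1 j χ m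
    · intro hb
      by_contra hc
      have := transfer1 j χ.not m (by rw [Formula.realize_not]; exact hc)
      rw [Formula.realize_not] at this
      exact this hb
  · intro j ψ n hreal
    by_contra hno
    push_neg at hno
    have hmem : ψ.not.relabel (Sum.map id n) ∈ S₂ := ⟨j, ψ, n, rfl, hno⟩
    have := hb2 _ hmem
    rw [Formula.realize_relabel] at this
    have hcomp : (Sum.elim b' val) ∘ (Sum.map id n)
        = Sum.elim b' (fun i => ((n i : U))) := by
      funext x; cases x <;> rfl
    rw [hcomp, Formula.realize_not] at this
    exact this hreal

open FirstOrder.Language in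
/-- **Proposition 4.14.** Let `M ≺ N ≺ U`. If `μ ∈ 𝔐_φ(U)` is finitely satisfiable over
`N` and `M`-invariant, then `μ` is finitely satisfiable over `M`. -/
theorem stmt_14
    {L : FirstOrder.Language.{0, 0}} (T : L.Theory) (hT : T.IsComplete)
    (hL : L.card ≤ Cardinal.aleph0)
    {U : Type} [L.Structure U] [Nonempty U] (hUT : T.Model U)
    (κ : Cardinal.{0}) (hκ : Cardinal.aleph0 < κ) (hreg : κ.IsRegular)
    (hsat : IsSaturated L U κ) (hhom : IsStronglyHomogeneous L U κ)
    {nx ny : ℕ} (φ : L.Formula (Fin nx ⊕ Fin ny))    (M N : L.ElementarySubstructure U) (hMN : M.toSubstructure ≤ N.toSubstructure)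
    (hN : #N < κ)
    (μ : KeislerMeasure U φ)
    (hfsN : FinSat φ N μ) (hinv : MInvariant φ M μ) :
    FinSat φ M μ := by
  intro s hs hpos
  obtain ⟨K, c, Θ, hrep⟩ := inPhiAlg_exists_formula φ hs
  obtain ⟨b', hsame, hheir⟩ := heir_exists hsat M N hMN hN c
  -- an automorphism over M sending c to b'
  have hform : ∀ ψ : L.Formula (↥M ⊕ Fin K),
      ψ.Realize (Sum.elim (fun m : M => (m : U)) c) ↔
        ψ.Realize (Sum.elim (fun m : M => (m : U)) b') :=
    fun ψ => sameTypeOver_realize M hsame ψ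
  have hMle : #(↥M) ≤ #(↥N) := by
    refine Cardinal.mk_le_of_injective (f := fun m : ↥M => (⟨(m : U), hMN m.2⟩ : ↥N)) ?_
    intro a b hab
    have h2 := congrArg (Subtype.val : ↥N → U) hab
    exact Subtype.ext h2
  have hι : #(↥M ⊕ Fin K) < κ := by
    rw [Cardinal.mk_sum, Cardinal.lift_id, Cardinal.lift_id, Cardinal.mk_fin]
    exact Cardinal.add_lt_of_lt hκ.le (lt_of_le_of_lt hMle hN)
      ((Cardinal.nat_lt_aleph0 K).trans hκ)
  obtain ⟨σ, hσ⟩ := hhom (↥M ⊕ Fin K) hι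
    (Sum.elim (fun m : M => (m : U)) c) (Sum.elim (fun m : M => (m : U)) b') hform
  have hfix : ∀ m : M, σ (m : U) = (m : U) := fun m => hσ (Sum.inl m)
  have hσc : (σ : U → U) ∘ c = b' := funext fun k => hσ (Sum.inr k)
  have himgμ := hinv σ hfix s hs
  have himg : (fun a : Fin nx → U => (σ : U → U) ∘ a) '' s
      = {x | Θ.Realize (Sum.elim x b')} := by
    rw [hrep, image_setOf_formula, hσc]
  have halg : InPhiAlg φ ((fun a : Fin nx → U => (σ : U → U) ∘ a) '' s) :=
    inPhiAlg_image φ σ hs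
  have hpos' : 0 < μ.toFun ((fun a : Fin nx → U => (σ : U → U) ∘ a) '' s) := by
    rw [himgμ]; exact hpos
  obtain ⟨a, ha⟩ := hfsN _ halg hpos'
  rw [himg] at ha
  have hsw : (Θ.relabel (Sum.elim Sum.inr Sum.inl : Fin nx ⊕ Fin K → Fin K ⊕ Fin nx)).Realize
      (Sum.elim b' (fun i => (a i : U))) := by
    rw [FirstOrder.Language.Formula.realize_relabel]
    have hcomp : (Sum.elim b' (fun i => (a i : U))) ∘
        (Sum.elim Sum.inr Sum.inl : Fin nx ⊕ Fin K → Fin K ⊕ Fin nx)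
        = Sum.elim (fun i => (a i : U)) b' := by
      funext x; cases x <;> rfl
    rw [hcomp]
    exact ha
  obtain ⟨m, hm⟩ := hheir nx (Θ.relabel (Sum.elim Sum.inr Sum.inl)) a hsw
  refine ⟨m, ?_⟩
  rw [FirstOrder.Language.Formula.realize_relabel] at hm
  have hcomp : (Sum.elim c (fun i => (m i : U))) ∘
      (Sum.elim Sum.inr Sum.inl : Fin nx ⊕ Fin K → Fin K ⊕ Fin nx)
      = Sum.elim (fun i => (m i : U)) c := by
    funext x; cases x <;> rfl
  rw [hcomp] at hm
  rw [hrep]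
  exact hm
end

section
/- Let T be a complete first-order theory in a countable language L, U a monster model of T (κ-saturated and strongly κ-homogeneous for a sufficiently large cardinal κ), M an elementary substructure of U with |M| < κ, and φ(x;y) a partitioned L-formula. Let μ ∈ 𝔐_φ(U). If μ is generically stable over M, then there exists an elementary substructure M_0 ≺ M with |M_0| = ℵ_0 such that μ is generically stable over M_0. -/
open FirstOrder Cardinal Set Filter Topology

variable {L : FirstOrder.Language.{0, 0}}

section Aux415

open FirstOrder Cardinal Set

namespace Aux415

/-- Syntax trees for elements of `Δ_φ` in `k` parameter blocks. -/
inductive DPhi (k : ℕ) : Type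
  | inst (j : Fin k) : DPhi k
  | fls : DPhi k
  | compl (t : DPhi k) : DPhi k
  | union (s t : DPhi k) : DPhi k

namespace DPhi

def encode {k : ℕ} : DPhi k → ℕ
  | inst j => Nat.pair 0 j
  | fls => Nat.pair 1 0
  | compl t => Nat.pair 2 t.encode
  | union s t => Nat.pair 3 (Nat.pair s.encode t.encode)

theorem encode_injective {k : ℕ} : Function.Injective (encode (k := k)) := by
  intro s
  induction s with
  | inst j =>
    intro t h
    cases t <;> simp only [encode, Nat.pair_eq_pair] at h
    · exact congrArg _ (Fin.val_injective h.2)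
    · omega
    · omega
    · omega
  | fls =>
    intro t h
    cases t <;> simp only [encode, Nat.pair_eq_pair] at h
    · omega
    · rfl
    · omega
    · omega
  | compl t ih =>
    intro t' h
    cases t' <;> simp only [encode, Nat.pair_eq_pair] at h
    · omega
    · omega
    · exact congrArg _ (ih h.2)
    · omega
  | union s t ihs iht =>
    intro t' h
    cases t' <;> simp only [encode, Nat.pair_eq_pair] at h
    · omega
    · omega
    · omega
    · obtain ⟨-, h1, h2⟩ := h
      rw [ihs h1, iht h2]

instance {k : ℕ} : Countable (DPhi k) :=
  ⟨⟨encode, encode_injective⟩⟩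

variable {L : FirstOrder.Language.{0, 0}} {U : Type} [L.Structure U] {nx ny : ℕ}

/-- Evaluation of a syntax tree on a tuple of parameter blocks. -/
def eval (φ : L.Formula (Fin nx ⊕ Fin ny)) {k : ℕ} : DPhi k →
    (Fin k → Fin ny → U) → Set (Fin nx → U)
  | inst j, bs => phiSet φ (bs j)
  | fls, _ => ∅
  | compl t, bs => (eval φ t bs)ᶜ
  | union s t, bs => eval φ s bs ∪ eval φ t bs

@[simp] theorem eval_inst (φ : L.Formula (Fin nx ⊕ Fin ny)) {k : ℕ} (j : Fin k)
    (bs : Fin k → Fin ny → U) : eval φ (inst j) bs = phiSet φ (bs j) := rfl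

@[simp] theorem eval_fls (φ : L.Formula (Fin nx ⊕ Fin ny)) {k : ℕ}
    (bs : Fin k → Fin ny → U) : eval φ (fls : DPhi k) bs = ∅ := rfl

@[simp] theorem eval_compl (φ : L.Formula (Fin nx ⊕ Fin ny)) {k : ℕ} (t : DPhi k)
    (bs : Fin k → Fin ny → U) : eval φ (compl t) bs = (eval φ t bs)ᶜ := rfl

@[simp] theorem eval_union (φ : L.Formula (Fin nx ⊕ Fin ny)) {k : ℕ} (s t : DPhi k)
    (bs : Fin k → Fin ny → U) : eval φ (union s t) bs = eval φ s bs ∪ eval φ t bs := rfl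

theorem inDeltaPhi_eval (φ : L.Formula (Fin nx ⊕ Fin ny)) {k : ℕ} (t : DPhi k) :
    InDeltaPhi φ k (fun bs : Fin k → Fin ny → U => eval φ t bs) := by
  induction t with
  | inst j => simp only [eval_inst]; exact InDeltaPhi.inst k j
  | fls => simp only [eval_fls]; exact InDeltaPhi.empty k
  | compl t ih => simp only [eval_compl]; exact InDeltaPhi.compl ih
  | union s t ihs iht => simp only [eval_union]; exact InDeltaPhi.union ihs iht

theorem exists_dphi_of_inDeltaPhi {φ : L.Formula (Fin nx ⊕ Fin ny)} {k : ℕ}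
    {G : (Fin k → Fin ny → U) → Set (Fin nx → U)} (h : InDeltaPhi φ k G) :
    ∃ t : DPhi k, (fun bs => eval φ t bs) = G := by
  induction h with
  | inst j => exact ⟨inst j, rfl⟩
  | empty => exact ⟨fls, rfl⟩
  | compl hG ih =>
    obtain ⟨t, ht⟩ := ih
    exact ⟨compl t, by funext bs; simp [← ht]⟩
  | union hG hH ihG ihH =>
    obtain ⟨t, ht⟩ := ihG
    obtain ⟨t', ht'⟩ := ihH
    exact ⟨union t t', by funext bs; simp [← ht, ← ht']⟩

theorem inPhiAlg_eval (φ : L.Formula (Fin nx ⊕ Fin ny)) {k : ℕ} (t : DPhi k)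
    (bs : Fin k → Fin ny → U) : InPhiAlg φ (eval φ t bs) := by
  induction t with
  | inst j => exact InPhiAlg.basic (bs j)
  | fls => exact InPhiAlg.empty
  | compl t ih => exact InPhiAlg.compl ih
  | union s t ihs iht => exact InPhiAlg.union ihs iht

/-- Relabelling of parameter blocks. -/
def map {k k' : ℕ} (f : Fin k → Fin k') : DPhi k → DPhi k'
  | inst j => inst (f j)
  | fls => fls
  | compl t => compl (map f t)
  | union s t => union (map f s) (map f t)

theorem eval_map (φ : L.Formula (Fin nx ⊕ Fin ny)) {k k' : ℕ} (f : Fin k → Fin k')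
    (t : DPhi k) (bs : Fin k' → Fin ny → U) :
    eval φ (map f t) bs = eval φ t (bs ∘ f) := by
  induction t with
  | inst j => rfl
  | fls => rfl
  | compl t ih => simp [map, ih]
  | union s t ihs iht => simp [map, ihs, iht]

theorem exists_eval_of_inPhiAlg {φ : L.Formula (Fin nx ⊕ Fin ny)} {s : Set (Fin nx → U)}
    (h : InPhiAlg φ s) :
    ∃ (k : ℕ) (t : DPhi k) (bs : Fin k → Fin ny → U), eval φ t bs = s := by
  induction h with
  | basic b => exact ⟨1, inst 0, fun _ => b, rfl⟩
  | empty => exact ⟨0, fls, fun i => i.elim0, rfl⟩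
  | compl hs ih =>
    obtain ⟨k, t, bs, ht⟩ := ih
    exact ⟨k, compl t, bs, by simp [ht]⟩
  | union hs ht ihs iht =>
    obtain ⟨k1, t1, bs1, h1⟩ := ihs
    obtain ⟨k2, t2, bs2, h2⟩ := iht
    refine ⟨k1 + k2, union (map (Fin.castAdd k2) t1) (map (Fin.natAdd k1) t2),
      fun i => Fin.addCases bs1 bs2 i, ?_⟩
    have e1 : (fun i => Fin.addCases (motive := fun _ => Fin ny → U) bs1 bs2 i) ∘
        Fin.castAdd k2 = bs1 := by
      funext i; simp
    have e2 : (fun i => Fin.addCases (motive := fun _ => Fin ny → U) bs1 bs2 i) ∘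
        Fin.natAdd k1 = bs2 := by
      funext i; simp
    simp only [eval_union, eval_map, e1, e2, h1, h2]

/-- The `L`-formula expressing membership in `eval φ t bs`. -/
def toFormula (φ : L.Formula (Fin nx ⊕ Fin ny)) {k : ℕ} : DPhi k →
    L.Formula (Fin nx ⊕ (Fin k × Fin ny))
  | inst j => φ.relabel (Sum.map id fun r => (j, r))
  | fls => ⊥
  | compl t => (toFormula φ t).not
  | union s t => toFormula φ s ⊔ toFormula φ t

theorem realize_toFormula (φ : L.Formula (Fin nx ⊕ Fin ny)) {k : ℕ} (t : DPhi k)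
    (a : Fin nx → U) (bs : Fin k → Fin ny → U) :
    (toFormula φ t).Realize (Sum.elim a fun q => bs q.1 q.2) ↔ a ∈ eval φ t bs := by
  induction t with
  | inst j =>
    have hv : (Sum.elim a fun q : Fin k × Fin ny => bs q.1 q.2) ∘
        (Sum.map id fun r : Fin ny => (j, r)) = Sum.elim a (bs j) := by
      funext x; cases x <;> rfl
    show (Language.Formula.relabel _ φ).Realize _ ↔ _
    rw [Language.Formula.realize_relabel, hv]
    rfl
  | fls =>
    show (⊥ : L.Formula _).Realize _ ↔ _
    simp [Language.Formula.realize_bot]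
  | compl t ih =>
    show (Language.Formula.not _).Realize _ ↔ _
    rw [Language.Formula.realize_not, ih]
    simp
  | union s t ihs iht =>
    show (_ ⊔ _ : L.Formula _).Realize _ ↔ _
    rw [Language.Formula.realize_sup, ihs, iht]
    simp

end DPhi

end Aux415

end Aux415

section Net415

open FirstOrder Cardinal Set

namespace Aux415

variable {L : FirstOrder.Language.{0, 0}} {U : Type} [L.Structure U] [Nonempty U] {nx ny : ℕ}

theorem exists_net (κ : Cardinal.{0}) (hsat : IsSaturated L U κ)
    (M : L.ElementarySubstructure U) (hM : #M < κ)
    (φ : L.Formula (Fin nx ⊕ Fin ny)) (μ : KeislerMeasure U φ)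
    (hdef : DefinableOver φ M μ) (hfs : FinSat φ M μ)
    (k : ℕ) (t : DPhi k) (ε : ℝ) (hε : 0 < ε) :
    ∃ F : Finset (Fin nx → M), ∀ bs : Fin k → Fin ny → U,
      ε ≤ μ.toFun (DPhi.eval φ t bs) →
        ∃ a ∈ F, (fun q => ((a q : U))) ∈ DPhi.eval φ t bs := by
  classical
  by_contra hcon
  push_neg at hcon
  obtain ⟨m, j, ρ, c, hpart, hvar⟩ :=
    hdef k (fun bs => DPhi.eval φ t bs) (DPhi.inDeltaPhi_eval φ t) ε hε
  -- pigeonhole: a single cell works for every finite set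
  have key : ∃ i : Fin m, ∀ F : Finset (Fin nx → M), ∃ bs : Fin k → Fin ny → U,
      (ρ i).Realize (Sum.elim (fun q => bs q.1 q.2) (fun s => (c s : U))) ∧
      ε ≤ μ.toFun (DPhi.eval φ t bs) ∧
      ∀ a ∈ F, (fun q => ((a q : U))) ∉ DPhi.eval φ t bs := by
    by_contra hk
    push_neg at hk
    choose F hF using hk
    obtain ⟨bs, hbs1, hbs2⟩ := hcon (Finset.univ.biUnion F)
    obtain ⟨i, hi, -⟩ := hpart bs
    obtain ⟨a, haF, hain⟩ := hF i bs hi hbs1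
    exact hbs2 a (Finset.mem_biUnion.2 ⟨i, Finset.mem_univ i, haF⟩) hain
  obtain ⟨i0, hi0⟩ := key
  obtain ⟨bs0, hbs0r, hbs0e, -⟩ := hi0 ∅
  -- the saturation type
  let emb : Fin k × Fin ny ≃ Fin (k * ny) := finProdFinEquiv
  let ρrel : L.Formula (Fin (k * ny) ⊕ ↥M) :=
    (ρ i0).relabel (Sum.elim (fun q => Sum.inl (emb q)) (fun s => Sum.inr (c s)))
  let fml : (Fin nx → M) → L.Formula (Fin (k * ny) ⊕ ↥M) := fun a =>
    ((DPhi.toFormula φ t).relabel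
      (Sum.elim (fun i => Sum.inr (a i)) (fun q => Sum.inl (emb q)))).not
  let Ssat : Set (L.Formula (Fin (k * ny) ⊕ ↥M)) := insert ρrel (Set.range fml)
  have coeM : ↥M → U := fun x => (x : U)
  -- realization computations
  have hreal_fml : ∀ (a : Fin nx → M) (b : Fin (k * ny) → U),
      (fml a).Realize (Sum.elim b (fun x : ↥M => (x : U))) ↔
        (fun i => (a i : U)) ∉ DPhi.eval φ t (fun q1 q2 => b (emb (q1, q2))) := by
    intro a b
    rw [show fml a = ((DPhi.toFormula φ t).relabel
      (Sum.elim (fun i => Sum.inr (a i)) (fun q => Sum.inl (emb q)))).not from rfl,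
      Language.Formula.realize_not, Language.Formula.realize_relabel]
    have hv : (Sum.elim b (fun x : ↥M => (x : U))) ∘
        (Sum.elim (fun i => Sum.inr (a i)) (fun q => Sum.inl (emb q))) =
        Sum.elim (fun i => (a i : U)) (fun q : Fin k × Fin ny =>
          (fun q1 q2 => b (emb (q1, q2))) q.1 q.2) := by
      funext x
      cases x with
      | inl i => rfl
      | inr q => simp
    rw [hv]
    exact not_congr (DPhi.realize_toFormula φ t (fun i => ((a i : U)))
      (fun q1 q2 => b (emb (q1, q2))))
  have hreal_rho : ∀ b : Fin (k * ny) → U,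
      ρrel.Realize (Sum.elim b (fun x : ↥M => (x : U))) ↔
        (ρ i0).Realize (Sum.elim
          (fun q : Fin k × Fin ny => (fun q1 q2 => b (emb (q1, q2))) q.1 q.2)
          (fun s => (c s : U))) := by
    intro b
    rw [show ρrel = (ρ i0).relabel
      (Sum.elim (fun q => Sum.inl (emb q)) (fun s => Sum.inr (c s))) from rfl,
      Language.Formula.realize_relabel]
    have hv : (Sum.elim b (fun x : ↥M => (x : U))) ∘
        (Sum.elim (fun q => Sum.inl (emb q)) (fun s : Fin j => Sum.inr (c s))) =
        Sum.elim (fun q : Fin k × Fin ny => (fun q1 q2 => b (emb (q1, q2))) q.1 q.2)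
          (fun s => (c s : U)) := by
      funext x
      cases x with
      | inl q => simp
      | inr s => rfl
    rw [hv]
  -- finite satisfiability of the type
  have hfinsat : ∀ s : Finset (L.Formula (Fin (k * ny) ⊕ ↥M)), ↑s ⊆ Ssat →
      ∃ b : Fin (k * ny) → U, ∀ ψ ∈ s, ψ.Realize (Sum.elim b (fun x : ↥M => (x : U))) := by
    intro s hs
    have : Nonempty ↥M := M.instNonempty
    let pick : L.Formula (Fin (k * ny) ⊕ ↥M) → (Fin nx → M) := fun ψ =>
      if h : ∃ a, fml a = ψ then h.choose else fun _ => Classical.arbitrary ↥M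
    obtain ⟨bs, hbsr, hbse, hbsn⟩ := hi0 (s.image pick)
    refine ⟨fun r => bs (emb.symm r).1 (emb.symm r).2, ?_⟩
    have hbseq : (fun q1 q2 => (fun r => bs (emb.symm r).1 (emb.symm r).2) (emb (q1, q2)))
        = bs := by
      funext q1 q2
      simp
    intro ψ hψ
    by_cases h : ∃ a, fml a = ψ
    · rw [← h.choose_spec, hreal_fml, hbseq]
      exact hbsn _ (Finset.mem_image.2 ⟨ψ, hψ, by simp [pick, h]⟩)
    · have : ψ = ρrel := by
        rcases hs hψ with h' | h'
        · exact h'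
        · exact absurd (by rcases h' with ⟨a, ha⟩; exact ⟨a, ha⟩) h
      rw [this, hreal_rho, hbseq]
      exact hbsr
  -- realize the type
  obtain ⟨b, hb⟩ := hsat ↥M hM (fun x : ↥M => (x : U)) (k * ny) Ssat hfinsat
  set bsU : Fin k → Fin ny → U := fun q1 q2 => b (emb (q1, q2)) with hbsU
  have hbρ : (ρ i0).Realize (Sum.elim (fun q : Fin k × Fin ny => bsU q.1 q.2)
      (fun s => (c s : U))) :=
    (hreal_rho b).1 (hb ρrel (Set.mem_insert _ _))
  have hpos : 0 < μ.toFun (DPhi.eval φ t bsU) := by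
    have hd := hvar i0 bsU bs0 hbρ hbs0r
    have := abs_lt.1 hd
    linarith [this.1]
  obtain ⟨a, ha⟩ := hfs (DPhi.eval φ t bsU) (DPhi.inPhiAlg_eval φ t bsU) hpos
  have : (fun i => (a i : U)) ∉ DPhi.eval φ t bsU :=
    (hreal_fml a b).1 (hb (fml a) (Set.mem_insert_of_mem _ ⟨a, rfl⟩))
  exact this ha

end Aux415

end Net415

section Main415

open FirstOrder Cardinal Set

namespace Aux415

variable {L : FirstOrder.Language.{0, 0}} {U : Type} [L.Structure U] [Nonempty U] {nx ny : ℕ}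

/-- Packaged data: a finite subset `D ⊆ M` of parameters such that any elementary
substructure containing `D` has the definability and net witnesses at level `1/(n+1)`. -/
theorem exists_D (κ : Cardinal.{0}) (hsat : IsSaturated L U κ)
    (M : L.ElementarySubstructure U) (hM : #M < κ)
    (φ : L.Formula (Fin nx ⊕ Fin ny)) (μ : KeislerMeasure U φ)
    (hgs : GenericallyStable φ M μ) (k : ℕ) (t : DPhi k) (n : ℕ) :
    ∃ D : Set U, D.Finite ∧ D ⊆ Set.range (fun x : M => (x : U)) ∧
      ∀ M₀ : L.ElementarySubstructure U, D ⊆ (M₀ : Set U) →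
        ((∃ (m j : ℕ) (ρ : Fin m → L.Formula ((Fin k × Fin ny) ⊕ Fin j)) (c : Fin j → M₀),
          (∀ bs : Fin k → Fin ny → U, ∃! i : Fin m,
            (ρ i).Realize (Sum.elim (fun q => bs q.1 q.2) (fun s => (c s : U)))) ∧
          ∀ i : Fin m, ∀ e e' : Fin k → Fin ny → U,
            (ρ i).Realize (Sum.elim (fun q => e q.1 q.2) (fun s => (c s : U))) →
            (ρ i).Realize (Sum.elim (fun q => e' q.1 q.2) (fun s => (c s : U))) →
            |μ.toFun (DPhi.eval φ t e) - μ.toFun (DPhi.eval φ t e')| < 1 / ((n : ℝ) + 1)) ∧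
        ∃ F : Finset (Fin nx → M₀), ∀ bs : Fin k → Fin ny → U,
          1 / ((n : ℝ) + 1) ≤ μ.toFun (DPhi.eval φ t bs) →
            ∃ a ∈ F, (fun q => ((a q : U))) ∈ DPhi.eval φ t bs) := by
  classical
  have hεpos : (0 : ℝ) < 1 / ((n : ℝ) + 1) := by positivity
  obtain ⟨m, j, ρ, c, hpart, hvar⟩ :=
    hgs.1 k (fun bs => DPhi.eval φ t bs) (DPhi.inDeltaPhi_eval φ t) (1 / ((n : ℝ) + 1)) hεpos
  obtain ⟨F, hF⟩ := exists_net κ hsat M hM φ μ hgs.1 hgs.2 k t (1 / ((n : ℝ) + 1)) hεpos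
  refine ⟨Set.range (fun s => (c s : U)) ∪ ⋃ a ∈ F, Set.range (fun q => ((a q : U))),
    (Set.finite_range _).union (F.finite_toSet.biUnion fun a _ => Set.finite_range _),
    ?_, ?_⟩
  · rintro u (⟨s, rfl⟩ | hu)
    · exact ⟨c s, rfl⟩
    · simp only [Set.mem_iUnion] at hu
      obtain ⟨a, -, q, rfl⟩ := hu
      exact ⟨a q, rfl⟩
  · intro M₀ hD
    constructor
    · refine ⟨m, j, ρ, fun s => ⟨(c s : U), hD (Or.inl ⟨s, rfl⟩)⟩, ?_, ?_⟩
      · exact hpart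
      · exact hvar
    · refine ⟨F.attach.image (fun a => fun q =>
        (⟨(a.1 q : U), hD (Or.inr (Set.mem_iUnion₂.2 ⟨a.1, a.2, ⟨q, rfl⟩⟩))⟩ : M₀)), ?_⟩
      intro bs hbs
      obtain ⟨a, haF, hain⟩ := hF bs hbs
      exact ⟨_, Finset.mem_image_of_mem _ (F.mem_attach ⟨a, haF⟩), hain⟩

end Aux415

end Main415

/-- **Proposition 4.15.** If `μ ∈ 𝔐_φ(U)` is generically stable over `M`, then there is a
countable elementary substructure `M₀ ≺ M` such that `μ` is generically stable over `M₀`. -/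
theorem stmt_15
    {L : FirstOrder.Language.{0, 0}} (T : L.Theory) (hT : T.IsComplete)
    (hL : L.card ≤ Cardinal.aleph0)
    {U : Type} [L.Structure U] [Nonempty U] (hUT : T.Model U)
    (κ : Cardinal.{0}) (hκ : Cardinal.aleph0 < κ) (hreg : κ.IsRegular)
    (hsat : IsSaturated L U κ) (hhom : IsStronglyHomogeneous L U κ)
    (hUinf : Infinite U)
    (M : L.ElementarySubstructure U) (hM : #M < κ)
    {nx ny : ℕ} (φ : L.Formula (Fin nx ⊕ Fin ny))    (μ : KeislerMeasure U φ)
    (hgs : GenericallyStable φ M μ) :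
    ∃ M₀ : L.ElementarySubstructure U, M₀.toSubstructure ≤ M.toSubstructure ∧
      #M₀ = Cardinal.aleph0 ∧ GenericallyStable φ M₀ μ := by
  classical
  haveI hMinf : Infinite ↥M :=
    (FirstOrder.Language.ElementarilyEquivalent.infinite_iff
      (M.elementarilyEquivalent)).2 hUinf
  -- choose, for each index, the finite parameter set
  have hex := fun p : Σ k : ℕ, Aux415.DPhi k × ℕ =>
    Aux415.exists_D κ hsat M hM φ μ hgs p.1 p.2.1 p.2.2
  choose D hDfin hDrange hDP using hex
  have hDtc : (⋃ p, D p).Countable := Set.countable_iUnion fun p => (hDfin p).countable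
  set s0 : Set ↥M := (fun x : ↥M => (x : U)) ⁻¹' (⋃ p, D p) with hs0def
  have hs0c : #↥s0 ≤ ℵ₀ :=
    le_trans (Cardinal.mk_preimage_of_injective _ _ Subtype.coe_injective) hDtc.le_aleph0
  -- Downward Löwenheim–Skolem inside M
  obtain ⟨N, hN_sub, hN_card⟩ :=
    FirstOrder.Language.exists_elementarySubstructure_card_eq.{0,0,0,0} L s0 ℵ₀ le_rfl
      (by simpa using hs0c) (by simpa using hL) (by simpa using Cardinal.aleph0_le_mk ↥M)
  have hN_card' : #↥N = ℵ₀ := by simpa using hN_card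
  -- transfer N to an elementary substructure of U
  let f : ↥M ↪[L] U := M.toSubstructure.subtype
  let Sub : L.Substructure U := N.toSubstructure.map f.toHom
  let e : ↥(N.toSubstructure) ≃[L] ↥Sub := f.substructureEquivMap N.toSubstructure
  have hSubElem : Sub.IsElementary := by
    intro n ψ x
    let y : Fin n → ↥(N.toSubstructure) := fun i => e.symm (x i)
    have hxy : x = ⇑e ∘ y := by
      funext i
      exact (e.apply_symm_apply (x i)).symm
    have hcoe : (fun i => ((x i : U))) = fun i => (((y i : ↥M) : U)) := by
      funext i
      rw [hxy]
      exact f.substructureEquivMap_apply N.toSubstructure (y i)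
    calc ψ.Realize (((↑) : ↥Sub → U) ∘ x)
        ↔ ψ.Realize (((↑) : ↥M → U) ∘ fun i => (y i : ↥M)) := by
            rw [show ((↑) : ↥Sub → U) ∘ x = fun i => ((x i : U)) from rfl, hcoe]
            exact Iff.rfl
      _ ↔ ψ.Realize (fun i => (y i : ↥M)) := M.isElementary' ψ _
      _ ↔ ψ.Realize y := N.isElementary' ψ y
      _ ↔ ψ.Realize (⇑e ∘ y) :=
          (FirstOrder.Language.StrongHomClass.realize_formula e ψ).symm
      _ ↔ ψ.Realize x := by rw [hxy]
  let M₀ : L.ElementarySubstructure U := ⟨Sub, hSubElem⟩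
  have hM₀le : M₀.toSubstructure ≤ M.toSubstructure := by
    rintro u hu
    obtain ⟨z, hz, rfl⟩ := FirstOrder.Language.Substructure.mem_map.1 hu
    exact z.2
  have hcard : #↥M₀ = ℵ₀ := (Cardinal.mk_congr e.toEquiv.symm).trans hN_card'
  have hDM₀ : ∀ p, D p ⊆ (M₀ : Set U) := by
    intro p u hu
    obtain ⟨x, rfl⟩ := hDrange p hu
    have hx : x ∈ s0 := Set.mem_preimage.2 (Set.mem_iUnion.2 ⟨p, hu⟩)
    have hxN : x ∈ N.toSubstructure := hN_sub hx
    exact FirstOrder.Language.Substructure.mem_map.2 ⟨x, hxN, rfl⟩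
  refine ⟨M₀, hM₀le, hcard, ?_, ?_⟩
  · -- DefinableOver
    intro k G hG ε hε
    obtain ⟨t, ht⟩ := Aux415.DPhi.exists_dphi_of_inDeltaPhi hG
    obtain ⟨n, hn⟩ := exists_nat_one_div_lt hε
    obtain ⟨hA, -⟩ := hDP ⟨k, t, n⟩ M₀ (hDM₀ ⟨k, t, n⟩)
    obtain ⟨m, j, ρ, c, hpart, hvar⟩ := hA
    refine ⟨m, j, ρ, c, hpart, ?_⟩
    intro i ee ee' h1 h2
    have hv := hvar i ee ee' h1 h2
    rw [← ht]
    exact lt_trans hv hn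
  · -- FinSat
    intro s hs hpos
    obtain ⟨k, t, bs, rfl⟩ := Aux415.DPhi.exists_eval_of_inPhiAlg hs
    obtain ⟨n, hn⟩ := exists_nat_one_div_lt hpos
    obtain ⟨-, hB⟩ := hDP ⟨k, t, n⟩ M₀ (hDM₀ ⟨k, t, n⟩)
    obtain ⟨F, hF⟩ := hB
    obtain ⟨a, -, ha⟩ := hF bs hn.le
    exact ⟨a, ha⟩
end
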